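/- arXiv:2112.10545 — 5 statements merged into one kernel-verified Lean document; each statement's English description precedes it below -/
import Mathlib

section
/- Let (A_N, B_N), N = 1, 2, …, be random vectors in ℝ^m × ℝ converging in distribution to (A, B), and let (b_N) be a sequence of real numbers with b_N → b_∞ ∈ ℝ. Suppose P(B = b_∞) = 0 and P(B ≤ b_∞) > 0. Then the conditional distribution of A_N given {B_N ≤ b_N} and the conditional distribution of A_N given {B_N ≤ b_∞} both converge weakly to the conditional distribution of A given {B ≤ b_∞}; in particular, the two conditioned sequences have the same limiting distribution. -/
/-!
STATEMENT 6: Weak convergence of conditional distributions under converging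
thresholds (Lemma S4(i)). If (A_N, B_N) ⇝ (A, B), b_N → b∞, P(B = b∞) = 0 and
P(B ≤ b∞) > 0, then the conditional laws of A_N given {B_N ≤ b_N} and given
{B_N ≤ b∞} both converge weakly to the conditional law of A given {B ≤ b∞}.
-/

open MeasureTheory ProbabilityTheory Matrix Filter
open scoped NNReal ENNReal Topology

noncomputable section

/-- Weak convergence of a sequence of measures: integrals of every bounded continuous
real-valued function converge. -/
def TendstoWeakly {E : Type*} [MeasurableSpace E] [TopologicalSpace E]
    (μs : ℕ → Measure E) (μ : Measure E) : Prop :=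
  ∀ f : BoundedContinuousFunction E ℝ,
    Tendsto (fun N => ∫ x, f x ∂(μs N)) atTop (𝓝 (∫ x, f x ∂μ))

/-- A continuous cutoff function: equal to `1` on `(-∞, c]`, equal to `0` on
`[c + δ, ∞)`, taking values in `[0,1]`. -/
def cutFun (c δ : ℝ) (s : ℝ) : ℝ := max 0 (min 1 (1 - (s - c) / δ))

lemma cutFun_cont (c δ : ℝ) : Continuous (cutFun c δ) := by
  unfold cutFun
  exact continuous_const.max (continuous_const.min (by fun_prop))

lemma cutFun_nonneg (c δ : ℝ) (s : ℝ) : 0 ≤ cutFun c δ s := le_max_left _ _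

lemma cutFun_le_one (c δ : ℝ) (s : ℝ) : cutFun c δ s ≤ 1 :=
  max_le zero_le_one (min_le_left _ _)

/-- A continuous cutoff function: equal to `1` on `(-∞, c]`, equal to `0` on
`[c + δ, ∞)`, taking values in `[0,1]`. -/
def cutBCF (c δ : ℝ) : BoundedContinuousFunction ℝ ℝ :=
  BoundedContinuousFunction.mkOfBound
    ⟨cutFun c δ, cutFun_cont c δ⟩ 1
    (by
      intro x y
      show dist (cutFun c δ x) (cutFun c δ y) ≤ 1
      rw [Real.dist_eq, abs_sub_le_iff]
      constructor
      · linarith [cutFun_nonneg c δ x, cutFun_le_one c δ x,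
          cutFun_nonneg c δ y, cutFun_le_one c δ y]
      · linarith [cutFun_nonneg c δ x, cutFun_le_one c δ x,
          cutFun_nonneg c δ y, cutFun_le_one c δ y])

lemma cutBCF_apply (c δ s : ℝ) : cutBCF c δ s = cutFun c δ s := rfl

lemma cutBCF_nonneg (c δ : ℝ) (s : ℝ) : 0 ≤ cutBCF c δ s := cutFun_nonneg c δ s

lemma cutBCF_le_one (c δ : ℝ) (s : ℝ) : cutBCF c δ s ≤ 1 := cutFun_le_one c δ s

lemma cutBCF_eq_one {c δ : ℝ} (hδ : 0 < δ) {s : ℝ} (hs : s ≤ c) : cutBCF c δ s = 1 := by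
  rw [cutBCF_apply]
  unfold cutFun
  have h1 : (s - c) / δ ≤ 0 := div_nonpos_of_nonpos_of_nonneg (by linarith) hδ.le
  rw [min_eq_left (by linarith)]
  exact max_eq_right zero_le_one

lemma cutBCF_eq_zero {c δ : ℝ} (hδ : 0 < δ) {s : ℝ} (hs : c + δ ≤ s) : cutBCF c δ s = 0 := by
  rw [cutBCF_apply]
  unfold cutFun
  have h1 : (1 : ℝ) ≤ (s - c) / δ := (one_le_div hδ).mpr (by linarith)
  rw [min_eq_right (by linarith)]
  exact max_eq_left (by linarith)

/-- If `|F| ≤ M` on `S` and `F = 0` off `S`, then `|∫ F dν| ≤ M * ν(S)`. -/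
lemma abs_integral_le_of_le_indicator {α : Type*} [MeasurableSpace α] (ν : Measure α)
    [IsFiniteMeasure ν] {F : α → ℝ} (hF : Integrable F ν) {S : Set α} (hS : MeasurableSet S)
    {M : ℝ} (hbound : ∀ q, |F q| ≤ S.indicator (fun _ => M) q) :
    |∫ q, F q ∂ν| ≤ M * (ν S).toReal := by
  have hInd : Integrable (S.indicator (fun _ => M)) ν := (integrable_const M).indicator hS
  calc |∫ q, F q ∂ν| ≤ ∫ q, |F q| ∂ν := by
        simpa only [Real.norm_eq_abs] using norm_integral_le_integral_norm F
    _ ≤ ∫ q, S.indicator (fun _ => M) q ∂ν := integral_mono hF.abs hInd hbound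
    _ = (ν S).toReal • M := integral_indicator_const M hS
    _ = M * (ν S).toReal := by rw [smul_eq_mul, mul_comm]

/-- Key lemma: if `μs ⇝ μ`, `t N → binf`, and `μ {q.2 = binf} = 0`, then for every bounded
continuous `g` the integrals of `g` over `{q.2 ≤ t N}` w.r.t. `μs N` converge to the integral
of `g` over `{q.2 ≤ binf}` w.r.t. `μ`. -/
lemma key_tendsto {m : ℕ} (μs : ℕ → Measure ((Fin m → ℝ) × ℝ)) (μ : Measure ((Fin m → ℝ) × ℝ))
    (hμs : ∀ N, IsProbabilityMeasure (μs N)) (hμ : IsProbabilityMeasure μ)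
    (hconv : TendstoWeakly μs μ) (t : ℕ → ℝ) (binf : ℝ) (ht : Tendsto t atTop (𝓝 binf))
    (hzero : μ {q | q.2 = binf} = 0) (g : BoundedContinuousFunction ((Fin m → ℝ) × ℝ) ℝ) :
    Tendsto (fun N => ∫ q, Set.indicator {q : (Fin m → ℝ) × ℝ | q.2 ≤ t N} (⇑g) q ∂(μs N)) atTop
      (𝓝 (∫ q, Set.indicator {q : (Fin m → ℝ) × ℝ | q.2 ≤ binf} (⇑g) q ∂μ)) := by
  set α := (Fin m → ℝ) × ℝ
  -- strips around the level binf
  set S : ℝ → Set α := fun δ => {q | |q.2 - binf| ≤ δ} with hS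
  have hSclosed : ∀ δ, IsClosed (S δ) := by
    intro δ
    have : S δ = (fun q : α => |q.2 - binf|) ⁻¹' Set.Iic δ := rfl
    rw [this]
    exact IsClosed.preimage (by continuity) isClosed_Iic
  have hSmeas : ∀ δ, MeasurableSet (S δ) := fun δ => (hSclosed δ).measurableSet
  have hEmeas : ∀ c : ℝ, MeasurableSet {q : α | q.2 ≤ c} := fun c =>
    (isClosed_le continuous_snd continuous_const).measurableSet
  -- bound on g
  set M : ℝ := ‖g‖ + 1 with hMdef
  have hM0 : 0 < M := by positivity
  have hgM : ∀ q : α, |g q| ≤ M := fun q => by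
    have := g.norm_coe_le_norm q
    rw [Real.norm_eq_abs] at this
    linarith
  rw [Metric.tendsto_nhds]
  intro ε hε
  set ε₀ : ℝ := ε / (8 * M) with hε₀def
  have hε₀ : 0 < ε₀ := by positivity
  -- small strip: choose δ with μ (S δ) < ε₀
  have hiInter : (⋂ n : ℕ, S (1 / (n + 1))) = {q : α | q.2 = binf} := by
    ext q
    simp only [Set.mem_iInter, Set.mem_setOf_eq, hS]
    constructor
    · intro h
      have h0 : |q.2 - binf| ≤ 0 :=
        ge_of_tendsto' tendsto_one_div_add_atTop_nhds_zero_nat fun n => h n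
      have := abs_nonneg (q.2 - binf)
      have : |q.2 - binf| = 0 := le_antisymm h0 this
      have := abs_eq_zero.mp this
      linarith
    · intro h n
      rw [h, sub_self, abs_zero]
      positivity
  have hcont : Tendsto (fun n : ℕ => μ (S (1 / (n + 1)))) atTop (𝓝 0) := by
    have h0 := tendsto_measure_iInter_atTop (μ := μ)
      (s := fun n : ℕ => S (1 / (n + 1)))
      (fun n => (hSmeas _).nullMeasurableSet)
      (fun i j hij => by
        intro q hq
        simp only [hS, Set.mem_setOf_eq] at hq ⊢
        change |q.2 - binf| ≤ 1 / ((j : ℝ) + 1) at hq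
        change |q.2 - binf| ≤ 1 / ((i : ℝ) + 1)
        refine hq.trans ?_
        gcongr)
      ⟨0, measure_ne_top μ _⟩
    rw [hiInter, hzero] at h0
    exact h0
  obtain ⟨n₀, hn₀⟩ := (hcont.eventually_lt_const
    (by simp [ENNReal.ofReal_pos, hε₀] : (0 : ℝ≥0∞) < ENNReal.ofReal ε₀)).exists
  set δ : ℝ := 1 / (n₀ + 1) with hδdef
  have hδ : 0 < δ := by positivity
  have hμS : μ (S δ) < ENNReal.ofReal ε₀ := hn₀
  -- probability-measure convergence, portmanteau for the closed strip
  let P : ℕ → ProbabilityMeasure α := fun N => ⟨μs N, hμs N⟩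
  let Pl : ProbabilityMeasure α := ⟨μ, hμ⟩
  have hPt : Tendsto P atTop (𝓝 Pl) :=
    ProbabilityMeasure.tendsto_iff_forall_integral_tendsto.mpr hconv
  have hlimsup : (atTop.limsup fun N => (P N : Measure α) (S δ)) ≤ (Pl : Measure α) (S δ) :=
    ProbabilityMeasure.limsup_measure_closed_le_of_tendsto hPt (hSclosed δ)
  have hev2 : ∀ᶠ N in atTop, μs N (S δ) < ENNReal.ofReal ε₀ :=
    eventually_lt_of_limsup_lt (lt_of_le_of_lt hlimsup hμS)
  -- eventually |t N - binf| ≤ δ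
  have hev1 : ∀ᶠ N in atTop, |t N - binf| ≤ δ := by
    filter_upwards [Metric.tendsto_nhds.mp ht δ hδ] with N h
    rw [Real.dist_eq] at h; exact h.le
  -- the mollified function
  set φ : BoundedContinuousFunction α ℝ :=
    (cutBCF binf δ).compContinuous ⟨Prod.snd, continuous_snd⟩ with hφdef
  have hφval : ∀ q : α, φ q = cutBCF binf δ q.2 := fun q => rfl
  have hev3 : ∀ᶠ N in atTop,
      |∫ q, (g * φ) q ∂(μs N) - ∫ q, (g * φ) q ∂μ| < ε / 4 := by
    filter_upwards [Metric.tendsto_nhds.mp (hconv (g * φ)) (ε / 4) (by positivity)] with N h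
    rw [Real.dist_eq] at h; exact h
  -- the master pointwise bound
  have hptbound : ∀ (t' : ℝ), |t' - binf| ≤ δ → ∀ q : α,
      |Set.indicator {q : α | q.2 ≤ t'} (⇑g) q - (g * φ) q| ≤
        (S δ).indicator (fun _ => 2 * M) q := by
    intro t' ht' q
    rcases le_or_gt (|q.2 - binf|) δ with hq | hq
    · -- inside the strip: crude bound
      have hqS : q ∈ S δ := hq
      rw [Set.indicator_of_mem hqS]
      have h1 : |Set.indicator {q : α | q.2 ≤ t'} (⇑g) q| ≤ M := by
        by_cases hmem : q ∈ {q : α | q.2 ≤ t'}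
        · rw [Set.indicator_of_mem hmem]; exact hgM q
        · rw [Set.indicator_of_notMem hmem, abs_zero]; exact hM0.le
      have h2 : |(g * φ) q| ≤ M := by
        rw [BoundedContinuousFunction.coe_mul, Pi.mul_apply, abs_mul]
        calc |g q| * |φ q| ≤ M * 1 := by
              apply mul_le_mul (hgM q) ?_ (abs_nonneg _) hM0.le
              rw [hφval, abs_of_nonneg (cutBCF_nonneg _ _ _)]
              exact cutBCF_le_one _ _ _
          _ = M := mul_one M
      calc |Set.indicator {q : α | q.2 ≤ t'} (⇑g) q - (g * φ) q|
          ≤ |Set.indicator {q : α | q.2 ≤ t'} (⇑g) q| + |(g * φ) q| := abs_sub _ _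
        _ ≤ 2 * M := by linarith
    · -- outside the strip: difference is zero
      have hqS : q ∉ S δ := by simp only [hS, Set.mem_setOf_eq]; exact not_le.mpr hq
      rw [Set.indicator_of_notMem hqS]
      rcases lt_or_ge q.2 binf with hcase | hcase
      · -- q.2 < binf - δ : both equal g q
        have hq2 : q.2 < binf - δ := by
          by_contra hcon
          push_neg at hcon
          have : |q.2 - binf| ≤ δ := abs_le.mpr ⟨by linarith, by linarith⟩
          exact absurd this (not_le.mpr hq)
        have hmem : q ∈ {q : α | q.2 ≤ t'} := by
          have : binf - δ ≤ t' := by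
            rcases abs_le.mp ht' with ⟨h1, _⟩; linarith
          exact le_trans hq2.le this
        rw [Set.indicator_of_mem hmem, BoundedContinuousFunction.coe_mul, Pi.mul_apply,
          hφval, cutBCF_eq_one hδ (by linarith : q.2 ≤ binf), mul_one, sub_self, abs_zero]
      · -- q.2 > binf + δ : both are zero
        have hq2 : binf + δ < q.2 := by
          by_contra hcon
          push_neg at hcon
          have : |q.2 - binf| ≤ δ := abs_le.mpr ⟨by linarith, by linarith⟩
          exact absurd this (not_le.mpr hq)
        have hmem : q ∉ {q : α | q.2 ≤ t'} := by
          simp only [Set.mem_setOf_eq, not_le]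
          rcases abs_le.mp ht' with ⟨_, h2⟩; linarith
        rw [Set.indicator_of_notMem hmem, BoundedContinuousFunction.coe_mul, Pi.mul_apply,
          hφval, cutBCF_eq_zero hδ (by linarith : binf + δ ≤ q.2), mul_zero, sub_self, abs_zero]
  -- the master integral bound
  have hbound : ∀ (ν : Measure α), IsProbabilityMeasure ν → ∀ (t' : ℝ), |t' - binf| ≤ δ →
      |∫ q, Set.indicator {q : α | q.2 ≤ t'} (⇑g) q ∂ν - ∫ q, (g * φ) q ∂ν| ≤
        2 * M * (ν (S δ)).toReal := by
    intro ν hν t' ht'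
    haveI := hν
    have hint1 : Integrable (Set.indicator {q : α | q.2 ≤ t'} (⇑g)) ν :=
      (g.integrable ν).indicator (hEmeas t')
    have hint2 : Integrable (⇑(g * φ)) ν := (g * φ).integrable ν
    rw [← integral_sub hint1 hint2]
    exact abs_integral_le_of_le_indicator ν (hint1.sub hint2) (hSmeas δ) (hptbound t' ht')
  -- combine everything
  filter_upwards [hev1, hev2, hev3] with N h1 h2 h3
  rw [Real.dist_eq]
  have hA : |∫ q, Set.indicator {q : α | q.2 ≤ t N} (⇑g) q ∂(μs N)
      - ∫ q, (g * φ) q ∂(μs N)| ≤ 2 * M * (μs N (S δ)).toReal :=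
    hbound (μs N) (hμs N) (t N) h1
  have hD : |∫ q, Set.indicator {q : α | q.2 ≤ binf} (⇑g) q ∂μ
      - ∫ q, (g * φ) q ∂μ| ≤ 2 * M * (μ (S δ)).toReal :=
    hbound μ hμ binf (by rw [sub_self, abs_zero]; exact hδ.le)
  have h2' : (μs N (S δ)).toReal < ε₀ := by
    have := ENNReal.toReal_lt_of_lt_ofReal h2
    exact this
  have hμS' : (μ (S δ)).toReal < ε₀ := ENNReal.toReal_lt_of_lt_ofReal hμS
  have hquarter : 2 * M * ε₀ = ε / 4 := by
    rw [hε₀def]; field_simp; ring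
  have hAbound : |∫ q, Set.indicator {q : α | q.2 ≤ t N} (⇑g) q ∂(μs N)
      - ∫ q, (g * φ) q ∂(μs N)| < ε / 4 := by
    calc |_| ≤ 2 * M * (μs N (S δ)).toReal := hA
      _ < 2 * M * ε₀ := by
          apply mul_lt_mul_of_pos_left h2' (by positivity)
      _ = ε / 4 := hquarter
  have hDbound : |∫ q, Set.indicator {q : α | q.2 ≤ binf} (⇑g) q ∂μ
      - ∫ q, (g * φ) q ∂μ| < ε / 4 := by
    calc |_| ≤ 2 * M * (μ (S δ)).toReal := hD
      _ < 2 * M * ε₀ := by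
          apply mul_lt_mul_of_pos_left hμS' (by positivity)
      _ = ε / 4 := hquarter
  calc |∫ q, Set.indicator {q : α | q.2 ≤ t N} (⇑g) q ∂(μs N)
        - ∫ q, Set.indicator {q : α | q.2 ≤ binf} (⇑g) q ∂μ|
      ≤ |∫ q, Set.indicator {q : α | q.2 ≤ t N} (⇑g) q ∂(μs N) - ∫ q, (g * φ) q ∂(μs N)|
        + |∫ q, (g * φ) q ∂(μs N) - ∫ q, (g * φ) q ∂μ|
        + |∫ q, (g * φ) q ∂μ - ∫ q, Set.indicator {q : α | q.2 ≤ binf} (⇑g) q ∂μ| := by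
          have := abs_sub_le
            (∫ q, Set.indicator {q : α | q.2 ≤ t N} (⇑g) q ∂(μs N))
            (∫ q, (g * φ) q ∂(μs N))
            (∫ q, Set.indicator {q : α | q.2 ≤ binf} (⇑g) q ∂μ)
          have h2 := abs_sub_le
            (∫ q, (g * φ) q ∂(μs N)) (∫ q, (g * φ) q ∂μ)
            (∫ q, Set.indicator {q : α | q.2 ≤ binf} (⇑g) q ∂μ)
          linarith
    _ < ε / 4 + ε / 4 + ε / 4 := by
        have hD' : |∫ q, (g * φ) q ∂μ
            - ∫ q, Set.indicator {q : α | q.2 ≤ binf} (⇑g) q ∂μ| < ε / 4 := by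
          rw [abs_sub_comm]; exact hDbound
        exact add_lt_add (add_lt_add hAbound h3) hD'
    _ < ε := by linarith

/-- Integral representation of the pushed-forward conditional distribution. -/
lemma cond_map_integral {m : ℕ} (ν : Measure ((Fin m → ℝ) × ℝ)) {E : Set ((Fin m → ℝ) × ℝ)}
    (hE : MeasurableSet E) (f : BoundedContinuousFunction (Fin m → ℝ) ℝ) :
    ∫ x, f x ∂((ν[|E]).map Prod.fst)
      = (ν E).toReal⁻¹ * ∫ q, E.indicator (fun q => f q.1) q ∂ν := by
  rw [integral_map measurable_fst.aemeasurable f.continuous.aestronglyMeasurable]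
  simp only [ProbabilityTheory.cond]
  rw [integral_smul_measure, ENNReal.toReal_inv, integral_indicator hE, smul_eq_mul]

theorem cond_weak_convergence_varying_threshold
    {m : ℕ} (μs : ℕ → Measure ((Fin m → ℝ) × ℝ)) (μ : Measure ((Fin m → ℝ) × ℝ))
    (hμs : ∀ N, IsProbabilityMeasure (μs N)) (hμ : IsProbabilityMeasure μ)
    (hconv : TendstoWeakly μs μ)
    (b : ℕ → ℝ) (binf : ℝ) (hb : Tendsto b atTop (𝓝 binf))
    (hzero : μ {q | q.2 = binf} = 0) (hpos : 0 < μ {q | q.2 ≤ binf}) :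
    TendstoWeakly (fun N => ((μs N)[|{q | q.2 ≤ b N}]).map Prod.fst)
        ((μ[|{q | q.2 ≤ binf}]).map Prod.fst)
    ∧ TendstoWeakly (fun N => ((μs N)[|{q | q.2 ≤ binf}]).map Prod.fst)
        ((μ[|{q | q.2 ≤ binf}]).map Prod.fst) := by
  set α := (Fin m → ℝ) × ℝ
  have hEmeas : ∀ c : ℝ, MeasurableSet {q : α | q.2 ≤ c} := fun c =>
    (isClosed_le continuous_snd continuous_const).measurableSet
  have hposR : 0 < (μ {q : α | q.2 ≤ binf}).toReal :=
    ENNReal.toReal_pos hpos.ne' (measure_ne_top μ _)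
  -- denominator convergence via the key lemma with g = 1
  have hden : ∀ (t : ℕ → ℝ), Tendsto t atTop (𝓝 binf) →
      Tendsto (fun N => (μs N {q : α | q.2 ≤ t N}).toReal) atTop
        (𝓝 ((μ {q : α | q.2 ≤ binf}).toReal)) := by
    intro t ht
    have h := key_tendsto μs μ hμs hμ hconv t binf ht hzero 1
    have hre : ∀ (ν : Measure α), IsProbabilityMeasure ν → ∀ c : ℝ,
        ∫ q, Set.indicator {q : α | q.2 ≤ c} (⇑(1 : BoundedContinuousFunction α ℝ)) q ∂ν
          = (ν {q : α | q.2 ≤ c}).toReal := by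
      intro ν hν c
      haveI := hν
      rw [show ⇑(1 : BoundedContinuousFunction α ℝ) = fun _ => (1 : ℝ) from rfl]
      rw [integral_indicator_const (1 : ℝ) (hEmeas c), smul_eq_mul, mul_one]
      rfl
    have h' := h.congr (fun N => hre (μs N) (hμs N) (t N))
    rwa [hre μ hμ binf] at h'
  -- the generic statement for an arbitrary threshold sequence
  have main : ∀ (t : ℕ → ℝ), Tendsto t atTop (𝓝 binf) →
      TendstoWeakly (fun N => ((μs N)[|{q : α | q.2 ≤ t N}]).map Prod.fst)
        ((μ[|{q : α | q.2 ≤ binf}]).map Prod.fst) := by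
    intro t ht f
    have hrw : ∀ N, ∫ x, f x ∂(((μs N)[|{q : α | q.2 ≤ t N}]).map Prod.fst)
        = (μs N {q : α | q.2 ≤ t N}).toReal⁻¹
          * ∫ q, Set.indicator {q : α | q.2 ≤ t N} (fun q : α => f q.1) q ∂(μs N) :=
      fun N => cond_map_integral (μs N) (hEmeas (t N)) f
    have hrw' : ∫ x, f x ∂((μ[|{q : α | q.2 ≤ binf}]).map Prod.fst)
        = (μ {q : α | q.2 ≤ binf}).toReal⁻¹
          * ∫ q, Set.indicator {q : α | q.2 ≤ binf} (fun q : α => f q.1) q ∂μ :=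
      cond_map_integral μ (hEmeas binf) f
    simp only [hrw, hrw']
    set G : BoundedContinuousFunction α ℝ :=
      f.compContinuous ⟨Prod.fst, continuous_fst⟩ with hG
    have hGval : ⇑G = fun q : α => f q.1 := rfl
    have hnum := key_tendsto μs μ hμs hμ hconv t binf ht hzero G
    rw [hGval] at hnum
    exact Tendsto.mul (((hden t ht).inv₀ hposR.ne')) hnum
  exact ⟨main b hb, main (fun _ => binf) tendsto_const_nhds⟩
end
end

section
/- Let (A_N, B_N), N = 1, 2, …, be random vectors in ℝ^m × ℝ converging in distribution to (A, B), and let B′_N be real random variables (defined on the same probability spaces) with B_N − B′_N → 0 in probability. Fix b ∈ ℝ with P(B = b) = 0 and P(B ≤ b) > 0. Then the conditional distribution of A_N given {B′_N ≤ b} converges weakly to the conditional distribution of A given {B ≤ b}; in particular, it has the same limit as the conditional distribution of A_N given {B_N ≤ b}. -/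
/-!
STATEMENT 7: Weak convergence of conditional distributions under asymptotically
equivalent conditioning statistics (Lemma S4(ii)). If (A_N, B_N) ⇝ (A, B),
B_N − B′_N → 0 in probability, P(B = b) = 0 and P(B ≤ b) > 0, then the conditional
law of A_N given {B′_N ≤ b} converges weakly to the conditional law of A given
{B ≤ b}, the same limit as conditioning on {B_N ≤ b}.
-/

open MeasureTheory ProbabilityTheory Matrix Filter
open scoped NNReal Topology ENNReal

noncomputable section

open MeasureTheory ProbabilityTheory Filter Set
open scoped NNReal Topology ENNReal BoundedContinuousFunction

noncomputable section

/-- A continuous cutoff function: 1 on `Iic (c - δ)`, 0 on `Ici c`. -/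
def cutR (c δ : ℝ) : ℝ →ᵇ ℝ :=
  BoundedContinuousFunction.ofNormedAddCommGroup
    (fun y => max 0 (min 1 ((c - y) / δ)))
    (continuous_const.max (continuous_const.min
      ((continuous_const.sub continuous_id).div_const δ)))
    1
    (fun y => by
      rw [Real.norm_eq_abs, abs_le]
      constructor
      · linarith [le_max_left (0:ℝ) (min 1 ((c - y)/δ))]
      · exact max_le zero_le_one (min_le_left _ _))

lemma cutR_apply (c δ y : ℝ) : cutR c δ y = max 0 (min 1 ((c - y) / δ)) := rfl

lemma cutR_nonneg (c δ y : ℝ) : 0 ≤ cutR c δ y := le_max_left _ _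

lemma cutR_le_one (c δ y : ℝ) : cutR c δ y ≤ 1 := by
  rw [cutR_apply]; exact max_le zero_le_one (min_le_left _ _)

lemma cutR_eq_one {c δ y : ℝ} (hδ : 0 < δ) (h : y ≤ c - δ) : cutR c δ y = 1 := by
  have h1 : (1:ℝ) ≤ (c - y) / δ := (one_le_div hδ).mpr (by linarith)
  rw [cutR_apply, min_eq_left h1, max_eq_right zero_le_one]

lemma cutR_eq_zero {c δ y : ℝ} (hδ : 0 < δ) (h : c ≤ y) : cutR c δ y = 0 := by
  have h1 : (c - y) / δ ≤ 0 := div_nonpos_of_nonpos_of_nonneg (by linarith) hδ.le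
  rw [cutR_apply, max_eq_left (le_trans (min_le_right _ _) h1)]

lemma cutR_pos_imp {c δ y : ℝ} (hδ : 0 < δ) (h : 0 < cutR c δ y) : y < c := by
  by_contra hy
  rw [cutR_eq_zero hδ (not_lt.mp hy)] at h
  exact lt_irrefl _ h

end
noncomputable section

abbrev Xs (m : ℕ) := (Fin m → ℝ) × ℝ

variable {m : ℕ}

lemma measurableSet_S (b : ℝ) : MeasurableSet {q : Xs m | q.2 ≤ b} :=
  measurable_snd measurableSet_Iic

lemma tendsto_S_measure {ν : ProbabilityMeasure (Xs m)} {νs : ℕ → ProbabilityMeasure (Xs m)}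
    (hconv : Tendsto νs atTop (𝓝 ν)) {b : ℝ}
    (hzero : (ν : Measure (Xs m)) {q | q.2 = b} = 0) :
    Tendsto (fun N => (νs N : Measure (Xs m)) {q | q.2 ≤ b}) atTop
      (𝓝 ((ν : Measure (Xs m)) {q | q.2 ≤ b})) := by
  apply MeasureTheory.ProbabilityMeasure.tendsto_measure_of_null_frontier_of_tendsto' hconv
  refine measure_mono_null ?_ hzero
  have : {q : Xs m | q.2 ≤ b} = {q : Xs m | (fun q : Xs m => q.2) q ≤ (fun _ => b) q} := rfl
  rw [this]
  exact frontier_le_subset_eq continuous_snd continuous_const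

end
noncomputable section
variable {m : ℕ}

lemma measurableSet_band (b δ : ℝ) : MeasurableSet {q : Xs m | |q.2 - b| ≤ δ} := by
  have : Measurable fun q : Xs m => |q.2 - b| := (measurable_snd.sub measurable_const).abs
  exact this measurableSet_Iic

lemma exists_band_small (ν : ProbabilityMeasure (Xs m)) {b : ℝ}
    (hzero : (ν : Measure (Xs m)) {q | q.2 = b} = 0) {ε : ℝ} (hε : 0 < ε) :
    ∃ δ : ℝ, 0 < δ ∧ ((ν : Measure (Xs m)) {q | |q.2 - b| ≤ δ}).toReal < ε := by
  set C : ℕ → Set (Xs m) := fun n => {q | |q.2 - b| ≤ 1 / (n + 1)} with hC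
  have hmeas : ∀ n, NullMeasurableSet (C n) (ν : Measure (Xs m)) :=
    fun n => (measurableSet_band b _).nullMeasurableSet
  have hanti : Antitone C := by
    intro i j hij q hq
    simp only [hC, Set.mem_setOf_eq] at hq ⊢
    refine le_trans hq ?_
    apply one_div_le_one_div_of_le (by positivity)
    have : (i:ℝ) + 1 ≤ (j:ℝ) + 1 := by
      have : (i:ℝ) ≤ (j:ℝ) := Nat.cast_le.mpr hij
      linarith
    exact this
  have hiInter : (⋂ n, C n) = {q : Xs m | q.2 = b} := by
    ext q
    simp only [Set.mem_iInter, hC, Set.mem_setOf_eq]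
    constructor
    · intro h
      have habs : |q.2 - b| ≤ 0 := by
        refine le_of_forall_pos_le_add ?_
        intro ε' hε'
        obtain ⟨n, hn⟩ := exists_nat_one_div_lt hε'
        exact le_trans (h n) (by linarith)
      have := abs_nonneg (q.2 - b)
      have : |q.2 - b| = 0 := le_antisymm habs this
      linarith [abs_eq_zero.mp this]
    · intro h n
      simp [h, sub_self]
      positivity
  have hkey : Tendsto (fun n => (ν : Measure (Xs m)) (C n)) atTop (𝓝 0) := by
    have := tendsto_measure_iInter_atTop hmeas hanti ⟨0, measure_ne_top _ _⟩
    rwa [hiInter, hzero] at this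
  have hkeyR : Tendsto (fun n => ((ν : Measure (Xs m)) (C n)).toReal) atTop (𝓝 0) := by
    have := (ENNReal.tendsto_toReal (by simp)).comp hkey
    exact this
  have := (hkeyR.eventually (eventually_lt_nhds hε)).exists
  obtain ⟨n, hn⟩ := this
  exact ⟨1 / (n + 1), by positivity, hn⟩

end
noncomputable section
variable {m : ℕ}

/-- snd as a continuous map. -/
def sndCM (m : ℕ) : C(Xs m, ℝ) := ⟨Prod.snd, continuous_snd⟩

lemma indicator_int_le {ρ : Measure (Xs m)} [IsProbabilityMeasure ρ] (g : Xs m →ᵇ ℝ)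
    {C : Set (Xs m)} (hC : MeasurableSet C) :
    ∫ x, C.indicator ⇑g x ∂ρ ≤ ‖g‖ * (ρ C).toReal := by
  have h1 : ∫ x, C.indicator ⇑g x ∂ρ ≤ ∫ x, C.indicator (fun _ => ‖g‖) x ∂ρ := by
    apply integral_mono ((g.integrable ρ).indicator hC)
      ((integrable_const ‖g‖).indicator hC)
    intro x
    apply Set.indicator_le_indicator
    calc g x ≤ |g x| := le_abs_self _
    _ ≤ ‖g‖ := g.norm_coe_le_norm x
  rw [integral_indicator_const _ hC] at h1
  simpa [mul_comm, Measure.real] using h1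

lemma tendsto_int_nonneg {ν : ProbabilityMeasure (Xs m)} {νs : ℕ → ProbabilityMeasure (Xs m)}
    (hconv : Tendsto νs atTop (𝓝 ν)) {b : ℝ}
    (hzero : (ν : Measure (Xs m)) {q | q.2 = b} = 0)
    (g : Xs m →ᵇ ℝ) (hg : ∀ x, 0 ≤ g x) :
    Tendsto (fun N => ∫ x, ({q : Xs m | q.2 ≤ b}).indicator ⇑g x ∂(νs N : Measure (Xs m)))
      atTop (𝓝 (∫ x, ({q : Xs m | q.2 ≤ b}).indicator ⇑g x ∂(ν : Measure (Xs m)))) := by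
  set S : Set (Xs m) := {q | q.2 ≤ b} with hS
  have hSmeas : MeasurableSet S := measurableSet_S b
  rw [Metric.tendsto_atTop]
  intro ε hε
  -- choose δ so that the band has small measure
  obtain ⟨δ, hδ, hband⟩ := exists_band_small ν hzero
    (show (0:ℝ) < ε / (4 * (‖g‖ + 1)) by positivity)
  set C : Set (Xs m) := {q | |q.2 - b| ≤ δ} with hCdef
  have hCmeas : MeasurableSet C := measurableSet_band b δ
  have hband' : ‖g‖ * ((ν : Measure (Xs m)) C).toReal < ε / 4 := by
    have hg1 : ‖g‖ ≤ ‖g‖ + 1 := by linarith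
    have h0 : (0:ℝ) ≤ ((ν : Measure (Xs m)) C).toReal := ENNReal.toReal_nonneg
    calc ‖g‖ * ((ν : Measure (Xs m)) C).toReal
        ≤ (‖g‖ + 1) * ((ν : Measure (Xs m)) C).toReal := by
          apply mul_le_mul_of_nonneg_right hg1 h0
      _ < (‖g‖ + 1) * (ε / (4 * (‖g‖ + 1))) := by
          apply mul_lt_mul_of_pos_left hband (by positivity)
      _ = ε / 4 := by field_simp
  set χp : Xs m →ᵇ ℝ := (cutR (b + δ) δ).compContinuous (sndCM m) with hχp
  set χm : Xs m →ᵇ ℝ := (cutR b δ).compContinuous (sndCM m) with hχm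
  have hχp_apply : ∀ x : Xs m, χp x = cutR (b + δ) δ x.2 := fun x => rfl
  have hχm_apply : ∀ x : Xs m, χm x = cutR b δ x.2 := fun x => rfl
  -- pointwise inequalities
  have hi : ∀ x, S.indicator ⇑g x ≤ (g * χp) x := by
    intro x
    by_cases hx : x ∈ S
    · rw [Set.indicator_of_mem hx]
      have : χp x = 1 := by
        rw [hχp_apply]; exact cutR_eq_one hδ (by have hxb : x.2 ≤ b := hx; linarith)
      simp [BoundedContinuousFunction.coe_mul, this]
    · rw [Set.indicator_of_notMem hx]
      exact mul_nonneg (hg x) (by rw [hχp_apply]; exact cutR_nonneg _ _ _)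
  have hii : ∀ x, (g * χp) x ≤ S.indicator ⇑g x + C.indicator ⇑g x := by
    intro x
    have hgχ : (g * χp) x ≤ g x := by
      simp only [BoundedContinuousFunction.coe_mul, Pi.mul_apply]
      nth_rewrite 2 [← mul_one (g x)]
      exact mul_le_mul_of_nonneg_left (by rw [hχp_apply]; exact cutR_le_one _ _ _) (hg x)
    by_cases hx : x ∈ S
    · rw [Set.indicator_of_mem hx]
      have := Set.indicator_nonneg (fun y _ => hg y) (s := C) x
      linarith
    · rw [Set.indicator_of_notMem hx]
      have hxb : b < x.2 := by simpa [hS, not_le] using hx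
      by_cases hp : 0 < χp x
      · have hlt : x.2 < b + δ := by
          rw [hχp_apply] at hp; exact cutR_pos_imp hδ hp
        have hxC : x ∈ C := by
          simp only [hCdef, Set.mem_setOf_eq, abs_sub_le_iff]
          constructor <;> linarith
        rw [Set.indicator_of_mem hxC]
        linarith
      · have hp0 : χp x = 0 := le_antisymm (not_lt.mp hp) (by rw [hχp_apply]; exact cutR_nonneg _ _ _) |>.symm ▸ rfl
        have : (g * χp) x = 0 := by
          simp only [BoundedContinuousFunction.coe_mul, Pi.mul_apply]
          have : χp x = 0 := le_antisymm (not_lt.mp hp) (by rw [hχp_apply]; exact cutR_nonneg _ _ _)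
          rw [this, mul_zero]
        rw [this]
        have := Set.indicator_nonneg (fun y _ => hg y) (s := C) x
        linarith
  have hiii : ∀ x, (g * χm) x ≤ S.indicator ⇑g x := by
    intro x
    by_cases hx : x ∈ S
    · rw [Set.indicator_of_mem hx]
      simp only [BoundedContinuousFunction.coe_mul, Pi.mul_apply]
      nth_rewrite 2 [← mul_one (g x)]
      exact mul_le_mul_of_nonneg_left (by rw [hχm_apply]; exact cutR_le_one _ _ _) (hg x)
    · rw [Set.indicator_of_notMem hx]
      have hxb : b < x.2 := by simpa [hS, not_le] using hx
      have : χm x = 0 := by rw [hχm_apply]; exact cutR_eq_zero hδ hxb.le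
      simp [BoundedContinuousFunction.coe_mul, this]
  have hiv : ∀ x, S.indicator ⇑g x ≤ (g * χm) x + C.indicator ⇑g x := by
    intro x
    have hgχ : 0 ≤ (g * χm) x :=
      mul_nonneg (hg x) (by rw [hχm_apply]; exact cutR_nonneg _ _ _)
    by_cases hx : x ∈ S
    · rw [Set.indicator_of_mem hx]
      by_cases hd : x.2 ≤ b - δ
      · have : χm x = 1 := by rw [hχm_apply]; exact cutR_eq_one hδ hd
        have hCind := Set.indicator_nonneg (fun y _ => hg y) (s := C) x
        simp only [BoundedContinuousFunction.coe_mul, Pi.mul_apply, this, mul_one]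
        linarith
      · have hxC : x ∈ C := by
          push_neg at hd
          have hxb : x.2 ≤ b := hx
          simp only [hCdef, Set.mem_setOf_eq, abs_sub_le_iff]
          constructor <;> linarith
        rw [Set.indicator_of_mem hxC]
        linarith
    · rw [Set.indicator_of_notMem hx]
      have := Set.indicator_nonneg (fun y _ => hg y) (s := C) x
      linarith
  -- integral inequalities for the limit measure
  have int_ind : ∀ ρ : ProbabilityMeasure (Xs m),
      Integrable (S.indicator ⇑g) (ρ : Measure (Xs m)) :=
    fun ρ => (g.integrable _).indicator hSmeas
  have int_indC : ∀ ρ : ProbabilityMeasure (Xs m),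
      Integrable (C.indicator ⇑g) (ρ : Measure (Xs m)) :=
    fun ρ => (g.integrable _).indicator hCmeas
  have hup : ∫ x, (g * χp) x ∂(ν : Measure (Xs m))
      ≤ ∫ x, S.indicator ⇑g x ∂(ν : Measure (Xs m)) + ‖g‖ * ((ν : Measure (Xs m)) C).toReal := by
    have h1 : ∫ x, (g * χp) x ∂(ν : Measure (Xs m))
        ≤ ∫ x, (S.indicator ⇑g x + C.indicator ⇑g x) ∂(ν : Measure (Xs m)) :=
      integral_mono ((g * χp).integrable _) ((int_ind ν).add (int_indC ν)) hii
    rw [integral_add (int_ind ν) (int_indC ν)] at h1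
    have h2 := indicator_int_le (ρ := (ν : Measure (Xs m))) g hCmeas
    linarith
  have hdown : ∫ x, S.indicator ⇑g x ∂(ν : Measure (Xs m))
      ≤ ∫ x, (g * χm) x ∂(ν : Measure (Xs m)) + ‖g‖ * ((ν : Measure (Xs m)) C).toReal := by
    have h1 : ∫ x, S.indicator ⇑g x ∂(ν : Measure (Xs m))
        ≤ ∫ x, ((g * χm) x + C.indicator ⇑g x) ∂(ν : Measure (Xs m)) :=
      integral_mono (int_ind ν) (((g * χm).integrable _).add (int_indC ν)) hiv
    rw [integral_add ((g * χm).integrable _) (int_indC ν)] at h1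
    have h2 := indicator_int_le (ρ := (ν : Measure (Xs m))) g hCmeas
    linarith
  -- convergence of the two auxiliary integrals
  have hcp := (MeasureTheory.ProbabilityMeasure.tendsto_iff_forall_integral_tendsto.mp hconv) (g * χp)
  have hcm := (MeasureTheory.ProbabilityMeasure.tendsto_iff_forall_integral_tendsto.mp hconv) (g * χm)
  have hev : ∀ᶠ N in atTop,
      dist (∫ x, (g * χp) x ∂(νs N : Measure (Xs m))) (∫ x, (g * χp) x ∂(ν : Measure (Xs m))) < ε / 4
      ∧ dist (∫ x, (g * χm) x ∂(νs N : Measure (Xs m))) (∫ x, (g * χm) x ∂(ν : Measure (Xs m))) < ε / 4 := by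
    filter_upwards [hcp.eventually (Metric.ball_mem_nhds _ (by positivity : (0:ℝ) < ε/4)),
      hcm.eventually (Metric.ball_mem_nhds _ (by positivity : (0:ℝ) < ε/4))] with N h1 h2
    exact ⟨h1, h2⟩
  obtain ⟨N₀, hN₀⟩ := eventually_atTop.mp hev
  refine ⟨N₀, fun n hn => ?_⟩
  obtain ⟨h1, h2⟩ := hN₀ n hn
  rw [Real.dist_eq] at h1 h2 ⊢
  rw [abs_lt] at h1 h2
  have hnup : ∫ x, S.indicator ⇑g x ∂(νs n : Measure (Xs m))
      ≤ ∫ x, (g * χp) x ∂(νs n : Measure (Xs m)) :=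
    integral_mono (int_ind (νs n)) ((g * χp).integrable _) hi
  have hndown : ∫ x, (g * χm) x ∂(νs n : Measure (Xs m))
      ≤ ∫ x, S.indicator ⇑g x ∂(νs n : Measure (Xs m)) :=
    integral_mono ((g * χm).integrable _) (int_ind (νs n)) hiii
  rw [abs_lt]
  constructor <;> nlinarith [hband', hup, hdown, hnup, hndown, h1.1, h1.2, h2.1, h2.2]

end
noncomputable section
variable {m : ℕ}

lemma indicator_int_add_const (ρ : Measure (Xs m)) [IsProbabilityMeasure ρ]
    (f : Xs m →ᵇ ℝ) (c : ℝ) {S : Set (Xs m)} (hS : MeasurableSet S) :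
    ∫ x, S.indicator ⇑(f + BoundedContinuousFunction.const (Xs m) c) x ∂ρ
      = ∫ x, S.indicator ⇑f x ∂ρ + c * (ρ S).toReal := by
  have hcoe : ⇑(f + BoundedContinuousFunction.const (Xs m) c) = ⇑f + fun _ => c := rfl
  have hpt : ∀ x, S.indicator (⇑f + fun _ => c) x
      = S.indicator ⇑f x + S.indicator (fun _ => c) x := by
    intro x; by_cases hx : x ∈ S <;> simp [hx]
  rw [hcoe]
  simp only [hpt]
  rw [integral_add ((f.integrable ρ).indicator hS) ((integrable_const c).indicator hS)]
  rw [integral_indicator_const _ hS]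
  simp [mul_comm, Measure.real]

lemma tendsto_int_general {ν : ProbabilityMeasure (Xs m)} {νs : ℕ → ProbabilityMeasure (Xs m)}
    (hconv : Tendsto νs atTop (𝓝 ν)) {b : ℝ}
    (hzero : (ν : Measure (Xs m)) {q | q.2 = b} = 0) (f : Xs m →ᵇ ℝ) :
    Tendsto (fun N => ∫ x, ({q : Xs m | q.2 ≤ b}).indicator ⇑f x ∂(νs N : Measure (Xs m)))
      atTop (𝓝 (∫ x, ({q : Xs m | q.2 ≤ b}).indicator ⇑f x ∂(ν : Measure (Xs m)))) := by
  set S : Set (Xs m) := {q | q.2 ≤ b} with hS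
  have hSmeas : MeasurableSet S := measurableSet_S b
  set g : Xs m →ᵇ ℝ := f + BoundedContinuousFunction.const (Xs m) ‖f‖ with hg
  have hgnn : ∀ x, 0 ≤ g x := by
    intro x
    have h1 : |f x| ≤ ‖f‖ := f.norm_coe_le_norm x
    have : g x = f x + ‖f‖ := rfl
    rw [this]
    have := neg_abs_le (f x)
    linarith
  have h1 := tendsto_int_nonneg hconv hzero g hgnn
  have h2 : Tendsto (fun N => ((νs N : Measure (Xs m)) S).toReal) atTop
      (𝓝 (((ν : Measure (Xs m)) S).toReal)) := by
    exact (ENNReal.tendsto_toReal (measure_ne_top _ _)).comp (tendsto_S_measure hconv hzero)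
  have h3 := h1.sub (h2.const_mul ‖f‖)
  have key : ∀ ρ : ProbabilityMeasure (Xs m),
      ∫ x, S.indicator ⇑g x ∂(ρ : Measure (Xs m)) - ‖f‖ * ((ρ : Measure (Xs m)) S).toReal
        = ∫ x, S.indicator ⇑f x ∂(ρ : Measure (Xs m)) := by
    intro ρ
    rw [hg, indicator_int_add_const _ f ‖f‖ hSmeas]
    ring
  convert h3.congr (fun N => key (νs N)) using 2
  exact (key ν).symm

end
noncomputable section


theorem aux_main
    {m : ℕ} (Ω : ℕ → Type) [∀ N, MeasurableSpace (Ω N)]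
    (P : ∀ N, Measure (Ω N)) (hP : ∀ N, IsProbabilityMeasure (P N))
    (A : ∀ N, Ω N → Fin m → ℝ) (B B' : ∀ N, Ω N → ℝ)
    (hA : ∀ N, Measurable (A N)) (hB : ∀ N, Measurable (B N))
    (hB' : ∀ N, Measurable (B' N))
    (μ : Measure ((Fin m → ℝ) × ℝ)) (hμ : IsProbabilityMeasure μ)
    (hconv : TendstoWeakly (fun N => (P N).map (fun ω => (A N ω, B N ω))) μ)
    (hprob : ∀ δ : ℝ, 0 < δ →
      Tendsto (fun N => P N {ω | δ ≤ |B N ω - B' N ω|}) atTop (𝓝 0))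
    (b : ℝ) (hzero : μ {q | q.2 = b} = 0) (hpos : 0 < μ {q | q.2 ≤ b}) :
    TendstoWeakly (fun N => ((P N)[|{ω | B' N ω ≤ b}]).map (A N))
        ((μ[|{q | q.2 ≤ b}]).map Prod.fst) := by
  haveI := hP
  set pair : ∀ N, Ω N → Xs m := fun N ω => (A N ω, B N ω) with hpair
  have hpairm : ∀ N, Measurable (pair N) := fun N => (hA N).prodMk (hB N)
  set ν : ProbabilityMeasure (Xs m) := ⟨μ, hμ⟩ with hν
  set νs : ℕ → ProbabilityMeasure (Xs m) :=
    fun N => ⟨(P N).map (pair N), Measure.isProbabilityMeasure_map (hpairm N).aemeasurable⟩ with hνs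
  have htend : Tendsto νs atTop (𝓝 ν) := by
    rw [MeasureTheory.ProbabilityMeasure.tendsto_iff_forall_integral_tendsto]
    exact fun f => hconv f
  set S : Set (Xs m) := {q | q.2 ≤ b} with hS
  have hSmeas : MeasurableSet S := measurableSet_S b
  set E : ∀ N, Set (Ω N) := fun N => {ω | B' N ω ≤ b} with hE
  set E₀ : ∀ N, Set (Ω N) := fun N => {ω | B N ω ≤ b} with hE₀
  have hEmeas : ∀ N, MeasurableSet (E N) := fun N => hB' N measurableSet_Iic
  have hE₀meas : ∀ N, MeasurableSet (E₀ N) := fun N => hB N measurableSet_Iic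
  set Δ : ∀ N, Set (Ω N) := fun N => (E N \ E₀ N) ∪ (E₀ N \ E N) with hΔdef
  have hΔmeas : ∀ N, MeasurableSet (Δ N) :=
    fun N => ((hEmeas N).diff (hE₀meas N)).union ((hE₀meas N).diff (hEmeas N))
  have hpreS : ∀ N, pair N ⁻¹' S = E₀ N := fun N => rfl
  have hmapS : ∀ N, (νs N : Measure (Xs m)) S = P N (E₀ N) := by
    intro N
    show ((P N).map (pair N)) S = P N (E₀ N)
    rw [Measure.map_apply (hpairm N) hSmeas, hpreS]
  -- the symmetric difference has vanishing probability
  have hΔ : Tendsto (fun N => (P N (Δ N)).toReal) atTop (𝓝 0) := by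
    rw [Metric.tendsto_atTop]
    intro ε hε
    obtain ⟨δ, hδ, hband⟩ := exists_band_small ν (hzero) (half_pos hε)
    set C : Set (Xs m) := {q | |q.2 - b| ≤ δ} with hCdef
    have hCmeas : MeasurableSet C := measurableSet_band b δ
    have hCclosed : IsClosed C := by
      have : C = (fun q : Xs m => |q.2 - b|) ⁻¹' (Set.Iic δ) := rfl
      rw [this]
      exact IsClosed.preimage ((continuous_snd.sub continuous_const).abs) isClosed_Iic
    -- eventually ν_N C is small
    have hlimsup := MeasureTheory.ProbabilityMeasure.limsup_measure_closed_le_of_tendsto htend hCclosed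
    have hCfin : (ν : Measure (Xs m)) C < ENNReal.ofReal (ε/2) := by
      rw [ENNReal.lt_ofReal_iff_toReal_lt (measure_ne_top _ _)]
      exact hband
    have hev1 : ∀ᶠ N in atTop, (νs N : Measure (Xs m)) C < ENNReal.ofReal (ε/2) :=
      Filter.eventually_lt_of_limsup_lt (lt_of_le_of_lt hlimsup hCfin)
    have hev2 : ∀ᶠ N in atTop, P N {ω | δ ≤ |B N ω - B' N ω|} < ENNReal.ofReal (ε/2) :=
      (hprob δ hδ).eventually (eventually_lt_nhds (by
        simp only [ENNReal.ofReal_pos]; linarith))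
    have hsub : ∀ N, Δ N ⊆ {ω | δ ≤ |B N ω - B' N ω|} ∪ (pair N ⁻¹' C) := by
      intro N ω hω
      by_cases hd : δ ≤ |B N ω - B' N ω|
      · exact Or.inl hd
      · push_neg at hd
        right
        have habs : |B N ω - B' N ω| < δ := hd
        simp only [Set.mem_preimage, hCdef, Set.mem_setOf_eq]
        rcases hω with h | h
        · -- B' ≤ b < B
          obtain ⟨h1, h2⟩ := h
          have hb1 : B' N ω ≤ b := h1
          have hb2 : ¬ B N ω ≤ b := h2
          push_neg at hb2
          rw [abs_sub_lt_iff] at habs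
          rw [abs_sub_le_iff]
          constructor <;> linarith [habs.1, habs.2]
        · obtain ⟨h1, h2⟩ := h
          have hb1 : B N ω ≤ b := h1
          have hb2 : ¬ B' N ω ≤ b := h2
          push_neg at hb2
          rw [abs_sub_lt_iff] at habs
          rw [abs_sub_le_iff]
          constructor <;> linarith [habs.1, habs.2]
    rw [eventually_atTop] at hev1 hev2
    obtain ⟨N₁, hN₁⟩ := hev1
    obtain ⟨N₂, hN₂⟩ := hev2
    refine ⟨max N₁ N₂, fun n hn => ?_⟩
    have h1 := hN₁ n (le_trans (le_max_left _ _) hn)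
    have h2 := hN₂ n (le_trans (le_max_right _ _) hn)
    have hle : P n (Δ n) ≤ P n {ω | δ ≤ |B n ω - B' n ω|} + P n (pair n ⁻¹' C) :=
      le_trans (measure_mono (hsub n)) (measure_union_le _ _)
    have hmapC : P n (pair n ⁻¹' C) = (νs n : Measure (Xs m)) C := by
      show _ = ((P n).map (pair n)) C
      rw [Measure.map_apply (hpairm n) hCmeas]
    rw [hmapC] at hle
    have hlt : P n (Δ n) < ENNReal.ofReal (ε/2) + ENNReal.ofReal (ε/2) :=
      lt_of_le_of_lt hle (ENNReal.add_lt_add h2 h1)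
    rw [← ENNReal.ofReal_add (by linarith) (by linarith)] at hlt
    have : (P n (Δ n)).toReal < ε/2 + ε/2 :=
      ENNReal.toReal_lt_of_lt_ofReal hlt
    rw [Real.dist_eq, sub_zero, abs_of_nonneg ENNReal.toReal_nonneg]
    linarith
  -- convergence of conditioning probabilities
  have hq : Tendsto (fun N => (P N (E₀ N)).toReal) atTop (𝓝 ((μ S).toReal)) := by
    have := (ENNReal.tendsto_toReal (measure_ne_top _ _)).comp (tendsto_S_measure htend hzero)
    simp only [Function.comp_def, hmapS] at this
    exact this.congr (fun N => congrArg ENNReal.toReal (hmapS N))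
  have habs_diff : ∀ N, |(P N (E N)).toReal - (P N (E₀ N)).toReal| ≤ (P N (Δ N)).toReal := by
    intro N
    have h1 : P N (E N) ≤ P N (E₀ N) + P N (Δ N) := by
      refine le_trans (measure_mono ?_) (measure_union_le _ _)
      intro ω hω
      by_cases h : ω ∈ E₀ N
      · exact Or.inl h
      · exact Or.inr (Or.inl ⟨hω, h⟩)
    have h2 : P N (E₀ N) ≤ P N (E N) + P N (Δ N) := by
      refine le_trans (measure_mono ?_) (measure_union_le _ _)
      intro ω hω
      by_cases h : ω ∈ E N
      · exact Or.inl h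
      · exact Or.inr (Or.inr ⟨hω, h⟩)
    have f1 : (P N (E N)).toReal ≤ (P N (E₀ N)).toReal + (P N (Δ N)).toReal := by
      rw [← ENNReal.toReal_add (measure_ne_top _ _) (measure_ne_top _ _)]
      exact ENNReal.toReal_mono (by finiteness) h1
    have f2 : (P N (E₀ N)).toReal ≤ (P N (E N)).toReal + (P N (Δ N)).toReal := by
      rw [← ENNReal.toReal_add (measure_ne_top _ _) (measure_ne_top _ _)]
      exact ENNReal.toReal_mono (by finiteness) h2
    rw [abs_sub_le_iff]
    constructor <;> linarith
  have hp : Tendsto (fun N => (P N (E N)).toReal) atTop (𝓝 ((μ S).toReal)) := by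
    have hdiff : Tendsto (fun N => (P N (E N)).toReal - (P N (E₀ N)).toReal) atTop (𝓝 0) := by
      apply squeeze_zero_norm (fun N => habs_diff N) hΔ
    have := hdiff.add hq
    simpa using this
  have hμSfin : μ S ≠ ⊤ := measure_ne_top _ _
  have hμS0 : μ S ≠ 0 := ne_of_gt hpos
  have hSpos : 0 < (μ S).toReal := ENNReal.toReal_pos hμS0 hμSfin
  -- main convergence for each test function
  intro f
  set g : Xs m →ᵇ ℝ := f.compContinuous (⟨Prod.fst, continuous_fst⟩ : C(Xs m, Fin m → ℝ)) with hg
  have hg_apply : ∀ x : Xs m, g x = f x.1 := fun x => rfl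
  have hgSM : StronglyMeasurable (S.indicator ⇑g) :=
    g.continuous.stronglyMeasurable.indicator hSmeas
  -- numerator convergence over E₀
  have hnum0 : Tendsto (fun N => ∫ ω, (E₀ N).indicator (fun ω' => f (A N ω')) ω ∂(P N))
      atTop (𝓝 (∫ x, S.indicator ⇑g x ∂μ)) := by
    have h1 := tendsto_int_general htend hzero g
    have heq : ∀ N, ∫ x, S.indicator ⇑g x ∂(νs N : Measure (Xs m))
        = ∫ ω, (E₀ N).indicator (fun ω' => f (A N ω')) ω ∂(P N) := by
      intro N
      show ∫ x, S.indicator ⇑g x ∂((P N).map (pair N)) = _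
      rw [integral_map (hpairm N).aemeasurable hgSM.aestronglyMeasurable]
      refine integral_congr_ae (Filter.Eventually.of_forall fun ω => ?_)
      show S.indicator ⇑g (pair N ω) = (E₀ N).indicator (fun ω' => f (A N ω')) ω
      by_cases hω : ω ∈ E₀ N
      · rw [Set.indicator_of_mem (show pair N ω ∈ S from hω), Set.indicator_of_mem hω]
        rfl
      · rw [Set.indicator_of_notMem (show pair N ω ∉ S from hω), Set.indicator_of_notMem hω]
    exact h1.congr heq
  -- integrability of f ∘ A over P N
  have hint : ∀ N, Integrable (fun ω => f (A N ω)) (P N) := by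
    intro N
    have : Integrable (⇑g ∘ pair N) (P N) := by
      rw [← integrable_map_measure g.continuous.stronglyMeasurable.aestronglyMeasurable
        (hpairm N).aemeasurable]
      exact g.integrable _
    exact this
  -- numerator over E is close to numerator over E₀
  have hnumdiff : ∀ N, |(∫ ω, (E N).indicator (fun ω' => f (A N ω')) ω ∂(P N))
      - (∫ ω, (E₀ N).indicator (fun ω' => f (A N ω')) ω ∂(P N))| ≤ ‖f‖ * (P N (Δ N)).toReal := by
    intro N
    set F : Ω N → ℝ := fun ω => f (A N ω) with hF
    have hiE : Integrable ((E N).indicator F) (P N) := (hint N).indicator (hEmeas N)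
    have hiE₀ : Integrable ((E₀ N).indicator F) (P N) := (hint N).indicator (hE₀meas N)
    rw [← integral_sub hiE hiE₀, ← Real.norm_eq_abs]
    have hbound : ∀ ω, ‖(E N).indicator F ω - (E₀ N).indicator F ω‖
        ≤ (Δ N).indicator (fun _ => ‖f‖) ω := by
      intro ω
      have hFb : ‖F ω‖ ≤ ‖f‖ := f.norm_coe_le_norm (A N ω)
      by_cases h1 : ω ∈ E N <;> by_cases h2 : ω ∈ E₀ N
      · simp only [Set.indicator_of_mem h1, Set.indicator_of_mem h2, sub_self, norm_zero]
        exact Set.indicator_nonneg (fun _ _ => norm_nonneg f) ω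
      · have hΔω : ω ∈ Δ N := Or.inl ⟨h1, h2⟩
        simp only [Set.indicator_of_mem h1, Set.indicator_of_notMem h2, sub_zero,
          Set.indicator_of_mem hΔω]
        exact hFb
      · have hΔω : ω ∈ Δ N := Or.inr ⟨h2, h1⟩
        simp only [Set.indicator_of_notMem h1, Set.indicator_of_mem h2, zero_sub, norm_neg,
          Set.indicator_of_mem hΔω]
        exact hFb
      · simp only [Set.indicator_of_notMem h1, Set.indicator_of_notMem h2, sub_self, norm_zero]
        exact Set.indicator_nonneg (fun _ _ => norm_nonneg f) ω
    calc ‖∫ ω, ((E N).indicator F ω - (E₀ N).indicator F ω) ∂(P N)‖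
        ≤ ∫ ω, (Δ N).indicator (fun _ => ‖f‖) ω ∂(P N) := by
          refine le_trans (norm_integral_le_integral_norm _) ?_
          exact integral_mono (hiE.sub hiE₀).norm
            ((integrable_const ‖f‖).indicator (hΔmeas N)) hbound
      _ = ‖f‖ * (P N (Δ N)).toReal := by
          rw [integral_indicator_const _ (hΔmeas N)]
          simp [mul_comm, Measure.real]
  have hnum : Tendsto (fun N => ∫ ω, (E N).indicator (fun ω' => f (A N ω')) ω ∂(P N))
      atTop (𝓝 (∫ x, S.indicator ⇑g x ∂μ)) := by
    have hdiff : Tendsto (fun N => (∫ ω, (E N).indicator (fun ω' => f (A N ω')) ω ∂(P N))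
        - (∫ ω, (E₀ N).indicator (fun ω' => f (A N ω')) ω ∂(P N))) atTop (𝓝 0) := by
      apply squeeze_zero_norm (fun N => hnumdiff N)
      simpa using hΔ.const_mul ‖f‖
    have := hdiff.add hnum0
    simpa using this
  -- identify the conditional integrals
  have hcond : ∀ N, ∫ y, f y ∂(((P N)[|E N]).map (A N))
      = ((P N (E N)).toReal)⁻¹ * ∫ ω, (E N).indicator (fun ω' => f (A N ω')) ω ∂(P N) := by
    intro N
    rw [integral_map (hA N).aemeasurable f.continuous.stronglyMeasurable.aestronglyMeasurable]
    show ∫ ω, f (A N ω) ∂((P N (E N))⁻¹ • (P N).restrict (E N)) = _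
    rw [integral_smul_measure, ← integral_indicator (hEmeas N), ENNReal.toReal_inv]
    rfl
  have hcondμ : ∫ y, f y ∂((μ[|S]).map Prod.fst)
      = ((μ S).toReal)⁻¹ * ∫ x, S.indicator ⇑g x ∂μ := by
    rw [integral_map measurable_fst.aemeasurable
      f.continuous.stronglyMeasurable.aestronglyMeasurable]
    show ∫ x, f x.1 ∂((μ S)⁻¹ • μ.restrict S) = _
    rw [integral_smul_measure, ← integral_indicator hSmeas, ENNReal.toReal_inv]
    rfl
  simp only [hcond, hcondμ]
  exact ((hp.inv₀ (ne_of_gt hSpos)).mul hnum).congr (fun N => (hcond N).symm)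

end

theorem cond_weak_convergence_equivalent_statistic
    {m : ℕ} (Ω : ℕ → Type) [∀ N, MeasurableSpace (Ω N)]
    (P : ∀ N, Measure (Ω N)) (hP : ∀ N, IsProbabilityMeasure (P N))
    (A : ∀ N, Ω N → Fin m → ℝ) (B B' : ∀ N, Ω N → ℝ)
    (hA : ∀ N, Measurable (A N)) (hB : ∀ N, Measurable (B N))
    (hB' : ∀ N, Measurable (B' N))
    (μ : Measure ((Fin m → ℝ) × ℝ)) (hμ : IsProbabilityMeasure μ)
    (hconv : TendstoWeakly (fun N => (P N).map (fun ω => (A N ω, B N ω))) μ)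
    (hprob : ∀ δ : ℝ, 0 < δ →
      Tendsto (fun N => P N {ω | δ ≤ |B N ω - B' N ω|}) atTop (𝓝 0))
    (b : ℝ) (hzero : μ {q | q.2 = b} = 0) (hpos : 0 < μ {q | q.2 ≤ b}) :
    TendstoWeakly (fun N => ((P N)[|{ω | B' N ω ≤ b}]).map (A N))
        ((μ[|{q | q.2 ≤ b}]).map Prod.fst)
    ∧ TendstoWeakly (fun N => ((P N)[|{ω | B N ω ≤ b}]).map (A N))
        ((μ[|{q | q.2 ≤ b}]).map Prod.fst) := by
  constructor
  · exact aux_main Ω P hP A B B' hA hB hB' μ hμ hconv hprob b hzero hpos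
  · refine aux_main Ω P hP A B B hA hB hB μ hμ hconv ?_ b hzero hpos
    intro δ hδ
    have hempty : ∀ N, {ω : Ω N | δ ≤ |B N ω - B N ω|} = ∅ := by
      intro N; ext ω; simp only [sub_self, abs_zero, Set.mem_setOf_eq, Set.mem_empty_iff_false,
        iff_false, not_le]; linarith
    simp only [hempty, measure_empty]
    exact tendsto_const_nhds
end
end

section
/- Let (A_N, B_N, C_N), N = 1, 2, …, be random vectors in ℝ^p × ℝ^m × ℝ^k converging in distribution to (A, B, C). Let φ_N, φ : ℝ^m × ℝ^k → {0, 1} be Borel-measurable functions such that, for almost every point (b, c) under the law of (B, C), φ_N converges continuously to φ at (b, c) (i.e., φ_N(b_N, c_N) → φ(b, c) for every sequence (b_N, c_N) → (b, c)), and suppose P(φ(B, C) = 1) > 0. Then P(φ_N(B_N, C_N) = 1) → P(φ(B, C) = 1), and the conditional distribution of (A_N, B_N) given the event {φ_N(B_N, C_N) = 1} converges weakly to the conditional distribution of (A, B) given {φ(B, C) = 1}. -/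
/-!
STATEMENT 8: Weak convergence under rerandomization with a general covariate
balance criterion (Lemma S5 / Lemma A1 of Li–Ding). If (A_N, B_N, C_N) ⇝ (A, B, C),
the {0,1}-valued balance indicator functions φ_N converge continuously to φ at
almost every point of the law of (B, C), and P(φ(B, C) = 1) > 0, then the acceptance
probabilities converge and the conditional law of (A_N, B_N) given acceptance
converges weakly to the conditional law of (A, B) given {φ(B, C) = 1}.
-/

open MeasureTheory ProbabilityTheory Matrix Filter
open scoped NNReal Topology ENNReal

noncomputable section

/-- Billingsley's extended continuous mapping: closed set limsup bound. -/
lemma ecmt_closed {Ω E : Type*} [MeasurableSpace Ω] [PseudoMetricSpace Ω]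
    [OpensMeasurableSpace Ω] [TopologicalSpace E]
    (μs : ℕ → Measure Ω) (μ : Measure Ω)
    [∀ N, IsProbabilityMeasure (μs N)] [IsProbabilityMeasure μ]
    (hconv : ∀ f : BoundedContinuousFunction Ω ℝ, Tendsto (fun N => ∫ x, f x ∂(μs N)) atTop (𝓝 (∫ x, f x ∂μ)))
    (hs : ℕ → Ω → E) (h : Ω → E)
    (hae : ∀ᵐ x ∂μ, ∀ xs : ℕ → Ω, Tendsto xs atTop (𝓝 x) →
      Tendsto (fun N => hs N (xs N)) atTop (𝓝 (h x)))
    (F : Set E) (F_closed : IsClosed F) :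
    atTop.limsup (fun N => μs N (hs N ⁻¹' F)) ≤ μ (h ⁻¹' F) := by
  classical
  have hP := (ProbabilityMeasure.tendsto_iff_forall_integral_tendsto
      (μs := fun N => (⟨μs N, inferInstance⟩ : ProbabilityMeasure Ω))
      (μ := ⟨μ, inferInstance⟩)).mpr hconv
  set T : ℕ → Set Ω := fun M => closure (⋃ N, ⋃ (_ : M ≤ N), hs N ⁻¹' F) with hT
  have T_closed : ∀ M, IsClosed (T M) := fun M => isClosed_closure
  have T_anti : Antitone T := by
    intro M M' hMM'
    apply closure_mono
    refine Set.iUnion_mono fun N => Set.iUnion_subset fun hN => ?_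
    exact Set.subset_iUnion (fun _ : M ≤ N => hs N ⁻¹' F) (hMM'.trans hN)
  have key1 : ∀ M, atTop.limsup (fun N => μs N (hs N ⁻¹' F)) ≤ μ (T M) := by
    intro M
    have h1 : ∀ᶠ N in atTop, μs N (hs N ⁻¹' F) ≤ μs N (T M) := by
      filter_upwards [eventually_ge_atTop M] with N hN
      exact measure_mono ((Set.subset_iUnion₂ (s := fun (N' : ℕ) (_ : M ≤ N') => hs N' ⁻¹' F)
        N hN).trans subset_closure)
    refine (limsup_le_limsup h1).trans ?_
    exact ProbabilityMeasure.limsup_measure_closed_le_of_tendsto hP (T_closed M)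
  have key2 : atTop.limsup (fun N => μs N (hs N ⁻¹' F)) ≤ μ (⋂ M, T M) := by
    rw [Directed.measure_iInter (fun M => (T_closed M).measurableSet.nullMeasurableSet)
      T_anti.directed_ge ⟨0, measure_ne_top μ _⟩]
    exact le_iInf key1
  refine key2.trans ?_
  have key3 : (⋂ M, T M) ⊆ (h ⁻¹' F) ∪
      {x | ¬ (∀ xs : ℕ → Ω, Tendsto xs atTop (𝓝 x) →
        Tendsto (fun N => hs N (xs N)) atTop (𝓝 (h x)))} := by
    intro x hx
    by_cases hgood : ∀ xs : ℕ → Ω, Tendsto xs atTop (𝓝 x) →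
        Tendsto (fun N => hs N (xs N)) atTop (𝓝 (h x))
    · left
      have hsel : ∀ j : ℕ, ∃ N, j ≤ N ∧ ∃ y, dist x y < 1 / (j + 1) ∧ hs N y ∈ F := by
        intro j
        have hxj : x ∈ T j := Set.mem_iInter.mp hx j
        rcases Metric.mem_closure_iff.mp hxj (1 / (j + 1)) (by positivity) with
          ⟨y, hy_mem, hy_dist⟩
        rcases Set.mem_iUnion₂.mp hy_mem with ⟨N, hN, hyF⟩
        exact ⟨N, hN, y, hy_dist, hyF⟩
      choose Nj hNj y hy hyF using hsel
      set z : ℕ → Ω := fun N => if hh : ∃ j, Nj j = N then y hh.choose else x with hz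
      have hz_tendsto : Tendsto z atTop (𝓝 x) := by
        rw [Metric.tendsto_atTop]
        intro ε hε
        obtain ⟨J, hJ⟩ : ∃ J : ℕ, 1 / ((J : ℝ) + 1) < ε := exists_nat_one_div_lt hε
        refine ⟨(Finset.range (J + 1)).sup Nj + 1, fun N hN => ?_⟩
        by_cases hh : ∃ j, Nj j = N
        · have hzN : z N = y hh.choose := by rw [hz]; simp only [dif_pos hh]
          have hjN : Nj hh.choose = N := hh.choose_spec
          have hjJ : J < hh.choose := by
            by_contra hle
            push_neg at hle
            have : Nj hh.choose ≤ (Finset.range (J + 1)).sup Nj :=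
              Finset.le_sup (Finset.mem_range.mpr (Nat.lt_succ_of_le hle))
            omega
          have hd : dist (z N) x < 1 / ((hh.choose : ℝ) + 1) := by
            rw [hzN, dist_comm]; exact hy _
          have hmono : 1 / ((hh.choose : ℝ) + 1) ≤ 1 / ((J : ℝ) + 1) := by
            apply one_div_le_one_div_of_le (by positivity)
            have : (J : ℝ) ≤ (hh.choose : ℝ) := by exact_mod_cast hjJ.le
            linarith
          exact (hd.trans_le hmono).trans hJ
        · have hzN : z N = x := by rw [hz]; simp only [dif_neg hh]
          simpa [hzN] using hε
      have hlim := hgood z hz_tendsto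
      have hNj_tendsto : Tendsto Nj atTop atTop := tendsto_atTop_mono hNj tendsto_id
      have hsub : Tendsto (fun j => hs (Nj j) (z (Nj j))) atTop (𝓝 (h x)) :=
        hlim.comp hNj_tendsto
      have hmem : ∀ j, hs (Nj j) (z (Nj j)) ∈ F := by
        intro j
        have hh : ∃ j', Nj j' = Nj j := ⟨j, rfl⟩
        have hzN : z (Nj j) = y hh.choose := by rw [hz]; simp only [dif_pos hh]
        have hmem' := hyF hh.choose
        rw [hh.choose_spec] at hmem'
        rw [hzN]
        exact hmem'
      exact F_closed.mem_of_tendsto hsub (Eventually.of_forall hmem)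
    · right; exact hgood
  refine (measure_mono key3).trans ?_
  refine (measure_union_le _ _).trans ?_
  rw [ae_iff.mp hae, add_zero]

/-- Extended continuous mapping theorem: weak convergence of pushforwards. -/
lemma ecmt_weak {Ω E : Type*} [MeasurableSpace Ω] [PseudoMetricSpace Ω]
    [OpensMeasurableSpace Ω] [MeasurableSpace E] [PseudoMetricSpace E]
    [OpensMeasurableSpace E]
    (μs : ℕ → Measure Ω) (μ : Measure Ω)
    [∀ N, IsProbabilityMeasure (μs N)] [IsProbabilityMeasure μ]
    (hconv : ∀ f : BoundedContinuousFunction Ω ℝ, Tendsto (fun N => ∫ x, f x ∂(μs N)) atTop (𝓝 (∫ x, f x ∂μ)))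
    (hs : ℕ → Ω → E) (h : Ω → E) (hs_meas : ∀ N, Measurable (hs N)) (h_meas : Measurable h)
    (hae : ∀ᵐ x ∂μ, ∀ xs : ℕ → Ω, Tendsto xs atTop (𝓝 x) →
      Tendsto (fun N => hs N (xs N)) atTop (𝓝 (h x)))
    (g : BoundedContinuousFunction E ℝ) :
    Tendsto (fun N => ∫ x, g (hs N x) ∂(μs N)) atTop (𝓝 (∫ x, g (h x) ∂μ)) := by
  haveI : ∀ N, IsProbabilityMeasure ((μs N).map (hs N)) :=
    fun N => Measure.isProbabilityMeasure_map (hs_meas N).aemeasurable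
  haveI : IsProbabilityMeasure (μ.map h) := Measure.isProbabilityMeasure_map h_meas.aemeasurable
  set νs : ℕ → ProbabilityMeasure E := fun N => ⟨(μs N).map (hs N), inferInstance⟩ with hνs
  set ν : ProbabilityMeasure E := ⟨μ.map h, inferInstance⟩ with hν
  have h_opens : ∀ G, IsOpen G → ν G ≤ atTop.liminf (fun N => νs N G) := by
    intro G hG
    have hclosed := ecmt_closed μs μ hconv hs h hae Gᶜ hG.isClosed_compl
    have hE : (ν : Measure E) G ≤ atTop.liminf fun N => (νs N : Measure E) G := by
      refine le_measure_liminf_of_limsup_measure_compl_le hG.measurableSet ?_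
      have e1 : ∀ N, (νs N : Measure E) Gᶜ = μs N (hs N ⁻¹' Gᶜ) := fun N =>
        Measure.map_apply (hs_meas N) hG.measurableSet.compl
      have e2 : (ν : Measure E) Gᶜ = μ (h ⁻¹' Gᶜ) :=
        Measure.map_apply h_meas hG.measurableSet.compl
      simpa [e1, e2] using hclosed
    have aux : (ENNReal.ofNNReal (atTop.liminf fun N => νs N G)) =
        atTop.liminf (fun N => ((νs N G : ℝ≥0) : ℝ≥0∞)) := by
      refine Monotone.map_liminf_of_continuousAt (F := atTop) ENNReal.coe_mono
        (fun N => νs N G) ENNReal.continuous_coe.continuousAt ?_ ?_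
      · exact IsBoundedUnder.isCoboundedUnder_ge ⟨1, by
          simp [eventually_map, ProbabilityMeasure.apply_le_one]⟩
      · exact ⟨0, by simp⟩
    rw [← ENNReal.coe_le_coe, aux]
    simpa [ProbabilityMeasure.ennreal_coeFn_eq_coeFn_toMeasure] using hE
  have htend := MeasureTheory.tendsto_of_forall_isOpen_le_liminf h_opens
  have hInt := ProbabilityMeasure.tendsto_iff_forall_integral_tendsto.mp htend g
  have e1 : ∀ N, ∫ x, g x ∂((νs N : Measure E)) = ∫ x, g (hs N x) ∂(μs N) := fun N =>
    integral_map (hs_meas N).aemeasurable g.continuous.aestronglyMeasurable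
  have e2 : ∫ x, g x ∂((ν : Measure E)) = ∫ x, g (h x) ∂μ :=
    integral_map h_meas.aemeasurable g.continuous.aestronglyMeasurable
  simpa [e1, e2] using hInt

theorem weak_convergence_under_ReG
    {p m k : ℕ}
    (μs : ℕ → Measure ((Fin p → ℝ) × (Fin m → ℝ) × (Fin k → ℝ)))
    (μ : Measure ((Fin p → ℝ) × (Fin m → ℝ) × (Fin k → ℝ)))
    (hμs : ∀ N, IsProbabilityMeasure (μs N)) (hμ : IsProbabilityMeasure μ)
    (hconv : TendstoWeakly μs μ)
    (φs : ℕ → (Fin m → ℝ) × (Fin k → ℝ) → ℝ) (φ : (Fin m → ℝ) × (Fin k → ℝ) → ℝ)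
    (hφs_meas : ∀ N, Measurable (φs N)) (hφ_meas : Measurable φ)
    (hφs01 : ∀ N y, φs N y = 0 ∨ φs N y = 1) (hφ01 : ∀ y, φ y = 0 ∨ φ y = 1)
    (hcont : ∀ᵐ y ∂(μ.map (fun x => (x.2.1, x.2.2))),
      ∀ ys : ℕ → (Fin m → ℝ) × (Fin k → ℝ), Tendsto ys atTop (𝓝 y) →
        Tendsto (fun N => φs N (ys N)) atTop (𝓝 (φ y)))
    (hpos : 0 < μ {x | φ (x.2.1, x.2.2) = 1}) :
    -- acceptance probabilities converge
    Tendsto (fun N => μs N {x | φs N (x.2.1, x.2.2) = 1}) atTop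
        (𝓝 (μ {x | φ (x.2.1, x.2.2) = 1}))
    -- conditional laws of (A_N, B_N) converge weakly
    ∧ TendstoWeakly
        (fun N => ((μs N)[|{x | φs N (x.2.1, x.2.2) = 1}]).map (fun x => (x.1, x.2.1)))
        ((μ[|{x | φ (x.2.1, x.2.2) = 1}]).map (fun x => (x.1, x.2.1))) := by
  haveI := hμ
  haveI : ∀ N, IsProbabilityMeasure (μs N) := hμs
  set Ω := (Fin p → ℝ) × (Fin m → ℝ) × (Fin k → ℝ) with hΩ
  set E := ((Fin p → ℝ) × (Fin m → ℝ)) × ℝ with hE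
  set π : Ω → (Fin p → ℝ) × (Fin m → ℝ) := fun x => (x.1, x.2.1) with hπ
  set g2 : Ω → (Fin m → ℝ) × (Fin k → ℝ) := fun x => (x.2.1, x.2.2) with hg2
  have π_meas : Measurable π := measurable_fst.prodMk (measurable_fst.comp measurable_snd)
  have π_cont : Continuous π := continuous_fst.prodMk (continuous_fst.comp continuous_snd)
  have g2_meas : Measurable g2 :=
    (measurable_fst.comp measurable_snd).prodMk (measurable_snd.comp measurable_snd)
  have g2_cont : Continuous g2 :=
    (continuous_fst.comp continuous_snd).prodMk (continuous_snd.comp continuous_snd)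
  set hsfun : ℕ → Ω → E := fun N x => (π x, φs N (g2 x)) with hhs
  set hfun : Ω → E := fun x => (π x, φ (g2 x)) with hh
  have hs_meas : ∀ N, Measurable (hsfun N) :=
    fun N => π_meas.prodMk ((hφs_meas N).comp g2_meas)
  have h_meas : Measurable hfun := π_meas.prodMk (hφ_meas.comp g2_meas)
  have hae : ∀ᵐ x ∂μ, ∀ xs : ℕ → Ω, Tendsto xs atTop (𝓝 x) →
      Tendsto (fun N => hsfun N (xs N)) atTop (𝓝 (hfun x)) := by
    filter_upwards [ae_of_ae_map g2_meas.aemeasurable hcont] with x hx xs hxs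
    have hπt : Tendsto (fun N => π (xs N)) atTop (𝓝 (π x)) :=
      (π_cont.tendsto x).comp hxs
    have hg2t : Tendsto (fun N => g2 (xs N)) atTop (𝓝 (g2 x)) :=
      (g2_cont.tendsto x).comp hxs
    exact hπt.prodMk_nhds (hx _ hg2t)
  set sN : ℕ → Set Ω := fun N => {x | φs N (x.2.1, x.2.2) = 1} with hsN
  set s : Set Ω := {x | φ (x.2.1, x.2.2) = 1} with hss
  have sN_meas : ∀ N, MeasurableSet (sN N) :=
    fun N => ((hφs_meas N).comp g2_meas) (measurableSet_singleton 1)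
  set ψ : ℝ → ℝ := fun t => min (max t 0) 1 with hψ
  have ψ_cont : Continuous ψ := (continuous_id.max continuous_const).min continuous_const
  set ψb : BoundedContinuousFunction ℝ ℝ :=
    BoundedContinuousFunction.ofNormedAddCommGroup ψ ψ_cont 1 (fun t => by
      rw [Real.norm_eq_abs, abs_le]
      constructor
      · have : (0:ℝ) ≤ min (max t 0) 1 := le_min (le_max_right t 0) zero_le_one
        simp only [hψ]; linarith
      · simp only [hψ]; exact min_le_right _ _) with hψb
  have ψb_apply : ∀ t, ψb t = ψ t := fun t => rfl
  have hkey : ∀ f : BoundedContinuousFunction ((Fin p → ℝ) × (Fin m → ℝ)) ℝ,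
      Tendsto (fun N => ∫ x in sN N, f (π x) ∂(μs N)) atTop
        (𝓝 (∫ x in s, f (π x) ∂μ)) := by
    intro f
    set gb : BoundedContinuousFunction E ℝ :=
      f.compContinuous ⟨Prod.fst, continuous_fst⟩ *
        ψb.compContinuous ⟨Prod.snd, continuous_snd⟩ with hgb
    have gb_apply : ∀ y : E, gb y = f y.1 * ψ y.2 := fun y => rfl
    have hmain := ecmt_weak μs μ hconv hsfun hfun hs_meas h_meas hae gb
    have eL : ∀ N, ∫ x, gb (hsfun N x) ∂(μs N) = ∫ x in sN N, f (π x) ∂(μs N) := by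
      intro N
      rw [← integral_indicator (sN_meas N)]
      congr 1
      funext x
      rw [gb_apply]
      by_cases hx : x ∈ sN N
      · have h1 : φs N (g2 x) = 1 := hx
        simp [Set.indicator_of_mem hx, hhs, hh, h1, hψ]
      · have h0 : φs N (g2 x) = 0 := by
          rcases hφs01 N (g2 x) with h0 | h1
          · exact h0
          · exact absurd h1 hx
        simp [Set.indicator_of_notMem hx, hhs, hh, h0, hψ]
    have hs_mble : MeasurableSet s := (hφ_meas.comp g2_meas) (measurableSet_singleton 1)
    have eR : ∫ x, gb (hfun x) ∂μ = ∫ x in s, f (π x) ∂μ := by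
      rw [← integral_indicator hs_mble]
      congr 1
      funext x
      rw [gb_apply]
      by_cases hx : x ∈ s
      · have h1 : φ (g2 x) = 1 := hx
        simp [Set.indicator_of_mem hx, hhs, hh, h1, hψ]
      · have h0 : φ (g2 x) = 0 := by
          rcases hφ01 (g2 x) with h0 | h1
          · exact h0
          · exact absurd h1 hx
        simp [Set.indicator_of_notMem hx, hhs, hh, h0, hψ]
    simpa [eL, eR] using hmain
  have part1' : Tendsto (fun N => (μs N (sN N)).toReal) atTop (𝓝 ((μ s).toReal)) := by
    have h1 := hkey (BoundedContinuousFunction.const _ (1:ℝ))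
    simp only [BoundedContinuousFunction.const_apply, setIntegral_const, smul_eq_mul,
      mul_one] at h1
    exact h1
  have part1 : Tendsto (fun N => μs N (sN N)) atTop (𝓝 (μ s)) := by
    have := ENNReal.tendsto_ofReal part1'
    simpa [ENNReal.ofReal_toReal (measure_ne_top _ _)] using this
  refine ⟨part1, ?_⟩
  intro f
  have hnum := hkey f
  have hdenpos : (μ s).toReal ≠ 0 :=
    (ENNReal.toReal_pos hpos.ne' (measure_ne_top μ s)).ne'
  have hmul := (part1'.inv₀ hdenpos).mul hnum
  have cond_eq : ∀ (ρ : Measure Ω) (t : Set Ω),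
      ∫ y, f y ∂((ρ[|t]).map π) = (ρ t).toReal⁻¹ * ∫ x in t, f (π x) ∂ρ := by
    intro ρ t
    rw [integral_map π_meas.aemeasurable f.continuous.aestronglyMeasurable,
      ProbabilityTheory.cond, integral_smul_measure, ENNReal.toReal_inv, smul_eq_mul]
  simpa [cond_eq] using hmul
end
end

section
/- Fix integers Q ≥ 2 and J ≥ 1. Let e ∈ ℝ^{Q−1} have strictly positive entries with Σ_{q=1}^{Q−1} e_q < 1, let R := diag(e₁, …, e_{Q−1}), let 𝟙 denote the (Q−1)×(Q−1) all-ones matrix, let Φ := R − e e^T, and let S be an invertible symmetric J×J matrix. Then (R ⊗ I_J)(Φ^{-1} ⊗ S^{-1})(R ⊗ I_J) = ((R^{-1} − 𝟙) ⊗ S)^{-1}. Equivalently, with Ψ := (Φ^{-1} R) ⊗ S^{-1}, V_Ψ := Φ^{-1} ⊗ S^{-1}, and V := (R^{-1} − 𝟙) ⊗ S, one has Ψ^T V_Ψ^{-1} Ψ = V^{-1}. -/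
/-!
STATEMENT 10: The Wald statistic of the multinomial logistic regression coefficients
is the Mahalanobis distance: (R ⊗ I_J)(Φ⁻¹ ⊗ S⁻¹)(R ⊗ I_J) = ((R⁻¹ − 𝟙) ⊗ S)⁻¹,
equivalently Ψᵀ V_Ψ⁻¹ Ψ = V⁻¹ with Ψ = (Φ⁻¹R) ⊗ S⁻¹, V_Ψ = Φ⁻¹ ⊗ S⁻¹,
V = (R⁻¹ − 𝟙) ⊗ S.
-/

open Matrix
open scoped Kronecker

noncomputable section

theorem multinomial_logistic_wald_identity
    (Q J : ℕ) (hQ : 2 ≤ Q) (hJ : 1 ≤ J)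
    (e : Fin (Q - 1) → ℝ) (he : ∀ q, 0 < e q) (hsum : ∑ q, e q < 1)
    (S : Matrix (Fin J) (Fin J) ℝ) (hSsym : S.IsSymm) (hSinv : IsUnit S.det) :
    let R : Matrix (Fin (Q - 1)) (Fin (Q - 1)) ℝ := Matrix.diagonal e
    let One : Matrix (Fin (Q - 1)) (Fin (Q - 1)) ℝ := Matrix.of fun _ _ => (1 : ℝ)
    let Φ : Matrix (Fin (Q - 1)) (Fin (Q - 1)) ℝ := R - vecMulVec e e
    (R ⊗ₖ (1 : Matrix (Fin J) (Fin J) ℝ)) * (Φ⁻¹ ⊗ₖ S⁻¹)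
        * (R ⊗ₖ (1 : Matrix (Fin J) (Fin J) ℝ))
      = ((R⁻¹ - One) ⊗ₖ S)⁻¹
    ∧ ((Φ⁻¹ * R) ⊗ₖ S⁻¹)ᵀ * (Φ⁻¹ ⊗ₖ S⁻¹)⁻¹ * ((Φ⁻¹ * R) ⊗ₖ S⁻¹)
      = ((R⁻¹ - One) ⊗ₖ S)⁻¹ := by
  intro R One Φ
  have hei : ∀ q, e q ≠ 0 := fun q => (he q).ne'
  have hRdet : IsUnit R.det := by
    rw [isUnit_iff_ne_zero, Matrix.det_diagonal]
    exact Finset.prod_ne_zero_iff.mpr fun q _ => hei q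
  have hRinv : R⁻¹ = Matrix.diagonal (fun q => (e q)⁻¹) := by
    refine Matrix.inv_eq_left_inv ?_
    show Matrix.diagonal _ * Matrix.diagonal e = 1
    rw [Matrix.diagonal_mul_diagonal,
      show (fun q => (e q)⁻¹ * e q) = fun _ => (1:ℝ) from funext fun q => inv_mul_cancel₀ (hei q),
      Matrix.diagonal_one]
  -- key identity: R⁻¹ * Φ * R⁻¹ = R⁻¹ - One
  have key : R⁻¹ * Φ * R⁻¹ = R⁻¹ - One := by
    rw [hRinv]
    ext i j
    rw [Matrix.mul_diagonal, Matrix.diagonal_mul]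
    show (e i)⁻¹ * ((Matrix.diagonal e - vecMulVec e e) i j) * (e j)⁻¹
      = (Matrix.diagonal fun q => (e q)⁻¹) i j - One i j
    rw [Matrix.sub_apply, Matrix.vecMulVec_apply]
    show _ = (Matrix.diagonal fun q => (e q)⁻¹) i j - 1
    have hi := hei i
    have hj := hei j
    by_cases h : i = j
    · subst h
      rw [Matrix.diagonal_apply_eq, Matrix.diagonal_apply_eq]
      field_simp
    · rw [Matrix.diagonal_apply_ne _ h, Matrix.diagonal_apply_ne _ h]
      field_simp
      ring
  -- Φ = R * (R⁻¹ - One) * R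
  have hΦeq : Φ = R * (R⁻¹ - One) * R := by
    rw [← key]
    simp only [Matrix.mul_assoc]
    rw [Matrix.nonsing_inv_mul _ hRdet, Matrix.mul_one,
      Matrix.mul_nonsing_inv_cancel_left _ _ hRdet]
  -- det (R⁻¹ - One) is a unit
  have hsub : IsUnit (R⁻¹ - One).det := by
    have hfact : R⁻¹ - One
        = R⁻¹ * (1 + Matrix.replicateCol Unit (-e) * Matrix.replicateRow Unit (fun _ => (1:ℝ))) := by
      rw [Matrix.mul_add, Matrix.mul_one, ← Matrix.vecMulVec_eq Unit, hRinv]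
      ext i j
      rw [Matrix.sub_apply, Matrix.add_apply, Matrix.diagonal_mul, Matrix.vecMulVec_apply]
      show _ - (1:ℝ) = _ + (e i)⁻¹ * (-e i * 1)
      have hi := hei i
      have h1 : (e i)⁻¹ * (-e i * 1) = -1 := by field_simp
      rw [h1]
      ring
    rw [hfact, Matrix.det_mul, Matrix.det_one_add_replicateCol_mul_replicateRow]
    refine (Matrix.isUnit_nonsing_inv_det _ hRdet).mul ?_
    rw [isUnit_iff_ne_zero]
    have h2 : (fun _ => (1:ℝ)) ⬝ᵥ (-e) = -∑ q, e q := by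
      simp [dotProduct]
    rw [h2]
    intro hcon
    have : ∑ q, e q = 1 := by linarith
    linarith
  have hΦdet : IsUnit Φ.det := by
    rw [hΦeq, Matrix.det_mul, Matrix.det_mul]
    exact (hRdet.mul hsub).mul hRdet
  -- central identity: R * Φ⁻¹ * R = (R⁻¹ - One)⁻¹
  have central : R * Φ⁻¹ * R = (R⁻¹ - One)⁻¹ := by
    rw [hΦeq, Matrix.mul_inv_rev, Matrix.mul_inv_rev]
    simp only [Matrix.mul_assoc]
    rw [Matrix.nonsing_inv_mul _ hRdet, Matrix.mul_one,
      Matrix.mul_nonsing_inv_cancel_left _ _ hRdet]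
  have hΦsymm : Φᵀ = Φ := by
    show (Matrix.diagonal e - vecMulVec e e)ᵀ = _
    rw [Matrix.transpose_sub, Matrix.diagonal_transpose]
    congr 1
    ext i j
    rw [Matrix.transpose_apply, Matrix.vecMulVec_apply, Matrix.vecMulVec_apply, mul_comm]
  constructor
  · rw [← Matrix.mul_kronecker_mul, ← Matrix.mul_kronecker_mul, Matrix.inv_kronecker,
      Matrix.one_mul, Matrix.mul_one, central]
  · rw [Matrix.inv_kronecker, Matrix.nonsing_inv_nonsing_inv _ hΦdet,
      Matrix.nonsing_inv_nonsing_inv _ hSinv]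
    rw [show ((Φ⁻¹ * R) ⊗ₖ S⁻¹)ᵀ = (Φ⁻¹ * R)ᵀ ⊗ₖ S⁻¹ᵀ from
      (Matrix.kroneckerMap_transpose _ _ _).symm]
    rw [Matrix.transpose_mul, Matrix.transpose_nonsing_inv, hΦsymm,
      Matrix.transpose_nonsing_inv, hSsym.eq]
    rw [show (Matrix.diagonal e)ᵀ = R from Matrix.diagonal_transpose e]
    rw [← Matrix.mul_kronecker_mul, ← Matrix.mul_kronecker_mul, Matrix.inv_kronecker]
    rw [Matrix.mul_assoc (R * Φ⁻¹) Φ (Φ⁻¹ * R), Matrix.mul_nonsing_inv_cancel_left _ _ hΦdet,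
      central, Matrix.nonsing_inv_mul _ hSinv, Matrix.one_mul]
end
end

section
/- Let (A_N, B_N, C_N), N = 1, 2, …, be random vectors in ℝ^p × ℝ^m × ℝ^k converging in distribution to (A, B, C), and suppose that A is independent of (B, C). Let φ_N, φ : ℝ^m × ℝ^k → {0, 1} be Borel-measurable functions such that, for almost every point (b, c) under the law of (B, C), φ_N(b_N, c_N) → φ(b, c) for every sequence (b_N, c_N) → (b, c), and suppose P(φ(B, C) = 1) > 0. Then the conditional distribution of A_N given the event {φ_N(B_N, C_N) = 1} converges weakly to the unconditional distribution of A. -/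
/-!
STATEMENT 14: If the limit A is independent of the balance statistics (B, C), then
the conditional law of A_N given acceptance by the converging balance criteria φ_N
converges weakly to the unconditional law of A (asymptotic distribution unaffected
by rerandomization). Independence of A and (B, C) is encoded as the joint limit law
being the product of its marginals.
-/

open MeasureTheory ProbabilityTheory Matrix Filter
open scoped NNReal Topology ENNReal

noncomputable section

section RerandomizationAux

open Metric



variable {Y : Type*} [PseudoMetricSpace Y]

/-- Points around which all late criteria `φs N` are locally constant `= c`. -/
def Gset (φs : ℕ → Y → ℝ) (j : ℕ) (c : ℝ) : Set Y :=
  {y | ∀ N, j ≤ N → ∀ x, dist x y < 1 / (j + 1) → φs N x = c}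

lemma Gset_mono (φs : ℕ → Y → ℝ) (c : ℝ) {j j' : ℕ} (h : j ≤ j') :
    Gset φs j c ⊆ Gset φs j' c := by
  intro y hy N hN x hx
  refine hy N (h.trans hN) x (hx.trans_le ?_)
  apply one_div_le_one_div_of_le
  · positivity
  · have : (j : ℝ) ≤ j' := by exact_mod_cast h
    linarith

lemma isClosed_Gset (φs : ℕ → Y → ℝ) (j : ℕ) (c : ℝ) : IsClosed (Gset φs j c) := by
  rw [← isOpen_compl_iff, Metric.isOpen_iff]
  intro y hy
  simp only [Gset, Set.mem_compl_iff, Set.mem_setOf_eq, not_forall] at hy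
  obtain ⟨N, hN, x, hx, hne⟩ := hy
  refine ⟨1 / (j + 1) - dist x y, by linarith, ?_⟩
  intro y' hy'
  rw [Metric.mem_ball] at hy'
  simp only [Gset, Set.mem_compl_iff, Set.mem_setOf_eq, not_forall]
  refine ⟨N, hN, x, ?_, hne⟩
  calc dist x y' ≤ dist x y + dist y y' := dist_triangle _ _ _
    _ < dist x y + (1 / (j + 1) - dist x y) := by rw [dist_comm y y']; linarith
    _ = 1 / (j + 1) := by ring

lemma thickening_Gset_subset (φs : ℕ → Y → ℝ) (j : ℕ) (c : ℝ) :
    Metric.thickening (1 / (j + 1) - 1 / (j + 2)) (Gset φs j c) ⊆ Gset φs (j + 1) c := by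
  intro z hz
  rw [Metric.mem_thickening_iff] at hz
  obtain ⟨y, hy, hdz⟩ := hz
  intro N hN x hx
  refine hy N (le_trans (Nat.le_succ j) hN) x ?_
  have hx' : dist x z < 1 / ((j : ℝ) + 2) := by
    rw [show ((j + 1 : ℕ) : ℝ) = (j : ℝ) + 1 by push_cast; ring] at hx
    rw [show (j : ℝ) + 1 + 1 = (j : ℝ) + 2 by ring] at hx
    exact hx
  calc dist x y ≤ dist x z + dist z y := dist_triangle _ _ _
    _ < 1 / ((j : ℝ) + 2) + (1 / (j + 1) - 1 / (j + 2)) := by linarith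
    _ = 1 / (j + 1) := by ring

lemma exists_mem_Gset (φs : ℕ → Y → ℝ) (φy : ℝ) {y : Y}
    (hφs01 : ∀ N x, φs N x = 0 ∨ φs N x = 1) (hφy : φy = 0 ∨ φy = 1)
    (hy : ∀ ys : ℕ → Y, Tendsto ys atTop (𝓝 y) →
      Tendsto (fun N => φs N (ys N)) atTop (𝓝 φy)) :
    ∃ j, y ∈ Gset φs j φy := by
  by_contra h
  push_neg at h
  simp only [Gset, Set.mem_setOf_eq, not_forall] at h
  choose Nf hNf xf hdist hne using h
  -- strictly increasing indices
  let jj : ℕ → ℕ := fun k => Nat.recAux 0 (fun _ prev => Nf prev + 1) k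
  have jjsucc : ∀ k, jj (k + 1) = Nf (jj k) + 1 := fun k => rfl
  have jjmono : StrictMono jj := by
    apply strictMono_nat_of_lt_succ
    intro k
    rw [jjsucc]
    exact lt_of_le_of_lt (hNf (jj k)) (Nat.lt_succ_self _)
  have umono : StrictMono (fun k => Nf (jj k)) := by
    apply strictMono_nat_of_lt_succ
    intro k
    have h1 : Nf (jj k) < jj (k + 1) := by rw [jjsucc]; exact Nat.lt_succ_self _
    exact lt_of_lt_of_le h1 (hNf (jj (k + 1)))
  set u : ℕ → ℕ := fun k => Nf (jj k) with hu
  classical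
  set ys : ℕ → Y := fun N => if h : ∃ k, u k = N then xf (jj (Classical.choose h)) else y
    with hys
  have hys_spec : ∀ k, ys (u k) = xf (jj k) := by
    intro k
    have hex : ∃ k', u k' = u k := ⟨k, rfl⟩
    have : Classical.choose hex = k := umono.injective (Classical.choose_spec hex)
    simp only [hys, dif_pos hex, this]
  have htends : Tendsto ys atTop (𝓝 y) := by
    rw [Metric.tendsto_atTop]
    intro ε hε
    obtain ⟨K, hK⟩ := exists_nat_one_div_lt hε
    refine ⟨u K, fun N hN => ?_⟩
    by_cases hex : ∃ k, u k = N
    · have hspec := Classical.choose_spec hex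
      set k := Classical.choose hex
      have hkK : K ≤ k := by
        by_contra hlt
        push_neg at hlt
        have := umono hlt
        omega
      have h1 : dist (ys N) y = dist (xf (jj k)) y := by
        rw [hys]; simp only [dif_pos hex]; rfl
      rw [h1]
      have h2 := hdist (jj k)
      have hk2 : (K : ℝ) + 1 ≤ (Nat.cast (jj k) : ℝ) + 1 := by
        have : K ≤ jj k := le_trans hkK (jjmono.le_apply)
        exact_mod_cast Nat.succ_le_succ this
      calc dist (xf (jj k)) y < 1 / ((Nat.cast (jj k) : ℝ) + 1) := h2
        _ ≤ 1 / ((K : ℝ) + 1) := by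
            apply one_div_le_one_div_of_le
            · positivity
            · exact hk2
        _ < ε := hK
    · simp only [hys, dif_neg hex]
      rwa [dist_self]
  have hT := hy ys htends
  rw [Metric.tendsto_nhds] at hT
  obtain ⟨M, hM⟩ := (eventually_atTop.1 (hT 1 one_pos))
  have hMu : M ≤ u M := umono.le_apply
  have h1 := hM (u M) hMu
  rw [hys_spec M] at h1
  have h2 := hne (jj M)
  rcases hφs01 (u M) (xf (jj M)) with ha | ha <;> rcases hφy with hb | hb <;>
    rw [ha, hb] at h1 h2 <;> simp [Real.dist_eq] at h1 h2 <;> linarith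




variable {Y : Type*} [PseudoMetricSpace Y]

/-- Real-valued thickened indicator as a bounded continuous function. -/
def tiR {δ : ℝ} (δpos : 0 < δ) (C : Set Y) : BoundedContinuousFunction Y ℝ where
  toFun := fun y => ((thickenedIndicator δpos C y : ℝ≥0) : ℝ)
  continuous_toFun := NNReal.continuous_coe.comp (thickenedIndicator δpos C).continuous
  map_bounded' := by
    refine ⟨1, fun x y => ?_⟩
    have h1 : ∀ z : Y, ((thickenedIndicator δpos C z : ℝ≥0) : ℝ) ∈ Set.Icc (0 : ℝ) 1 :=
      fun z => ⟨(thickenedIndicator δpos C z).coe_nonneg, by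
        exact_mod_cast thickenedIndicator_le_one δpos C z⟩
    obtain ⟨ha, hb⟩ := h1 x
    obtain ⟨hc, hd⟩ := h1 y
    rw [Real.dist_eq, abs_le]
    constructor <;> linarith

lemma tiR_nonneg {δ : ℝ} (δpos : 0 < δ) (C : Set Y) (y : Y) : 0 ≤ tiR δpos C y :=
  (thickenedIndicator δpos C y).coe_nonneg

lemma tiR_le_one {δ : ℝ} (δpos : 0 < δ) (C : Set Y) (y : Y) : tiR δpos C y ≤ 1 := by
  have := thickenedIndicator_le_one δpos C y
  exact_mod_cast this

lemma tiR_one {δ : ℝ} (δpos : 0 < δ) (C : Set Y) {y : Y} (hy : y ∈ C) : tiR δpos C y = 1 := by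
  show ((thickenedIndicator δpos C y : ℝ≥0) : ℝ) = 1
  rw [thickenedIndicator_one δpos C hy]; norm_num

lemma tiR_zero {δ : ℝ} (δpos : 0 < δ) (C : Set Y) {y : Y}
    (hy : y ∉ Metric.thickening δ C) : tiR δpos C y = 0 := by
  show ((thickenedIndicator δpos C y : ℝ≥0) : ℝ) = 0
  rw [thickenedIndicator_zero δpos C hy]; norm_num

lemma tiR_abs_le_one {δ : ℝ} (δpos : 0 < δ) (C : Set Y) (y : Y) : |tiR δpos C y| ≤ 1 := by
  rw [abs_le]; exact ⟨by linarith [tiR_nonneg δpos C y], tiR_le_one δpos C y⟩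

variable {X : Type*} [MeasurableSpace X] [TopologicalSpace X] [OpensMeasurableSpace X]
  [MeasurableSpace Y] [OpensMeasurableSpace Y]

lemma int_aux (f : BoundedContinuousFunction X ℝ) (ν : Measure (X × Y))
    [IsProbabilityMeasure ν] (g : Y → ℝ) (hgm : Measurable g) (hg1 : ∀ y, |g y| ≤ 1) :
    Integrable (fun x : X × Y => f x.1 * g x.2) ν := by
  refine Integrable.mono' (integrable_const ‖f‖)
    (((f.continuous.measurable.comp measurable_fst).mul
      (hgm.comp measurable_snd)).aestronglyMeasurable) (ae_of_all _ fun x => ?_)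
  rw [norm_mul]
  calc ‖f x.1‖ * ‖g x.2‖ ≤ ‖f‖ * 1 :=
        mul_le_mul (f.norm_coe_le_norm x.1) (by rw [Real.norm_eq_abs]; exact hg1 _)
          (norm_nonneg _) (norm_nonneg _)
    _ = ‖f‖ := mul_one _


set_option maxHeartbeats 1000000 in
lemma key_nonneg
    (μs : ℕ → Measure (X × Y)) (μ : Measure (X × Y))
    (hμs : ∀ N, IsProbabilityMeasure (μs N)) (hμ : IsProbabilityMeasure μ)
    (hconv : TendstoWeakly μs μ)
    (φs : ℕ → Y → ℝ) (φ : Y → ℝ)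
    (hφs_meas : ∀ N, Measurable (φs N)) (hφ_meas : Measurable φ)
    (hφs01 : ∀ N y, φs N y = 0 ∨ φs N y = 1) (hφ01 : ∀ y, φ y = 0 ∨ φ y = 1)
    (hcont : ∀ᵐ x ∂μ, ∀ ys : ℕ → Y, Tendsto ys atTop (𝓝 x.2) →
      Tendsto (fun N => φs N (ys N)) atTop (𝓝 (φ x.2)))
    (f : BoundedContinuousFunction X ℝ) (hf : ∀ x, 0 ≤ f x) :
    Tendsto (fun N => ∫ x, f x.1 * φs N x.2 ∂(μs N)) atTop (𝓝 (∫ x, f x.1 * φ x.2 ∂μ)) := by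
  haveI := hμ
  have hφs_abs : ∀ N y, |φs N y| ≤ 1 := fun N y => by
    rcases hφs01 N y with h | h <;> rw [h] <;> norm_num
  have hφ_abs : ∀ y, |φ y| ≤ 1 := fun y => by
    rcases hφ01 y with h | h <;> rw [h] <;> norm_num
  have conv_prod : ∀ g : BoundedContinuousFunction Y ℝ,
      Tendsto (fun N => ∫ x, f x.1 * g x.2 ∂(μs N)) atTop (𝓝 (∫ x, f x.1 * g x.2 ∂μ)) := by
    intro g
    have h := hconv ((f.compContinuous (⟨Prod.fst, continuous_fst⟩ : C(X × Y, X))) *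
      (g.compContinuous (⟨Prod.snd, continuous_snd⟩ : C(X × Y, Y))))
    simpa using h
  have haeφc : ∀ᵐ x ∂μ, ∀ (j' : ℕ) (c : ℝ), x.2 ∈ Gset φs j' c → φ x.2 = c := by
    filter_upwards [hcont] with x hx j' c hmem
    have h1 : Tendsto (fun N => φs N x.2) atTop (𝓝 (φ x.2)) :=
      hx (fun _ => x.2) tendsto_const_nhds
    have h2 : Tendsto (fun _ : ℕ => c) atTop (𝓝 (φ x.2)) := by
      refine h1.congr' ?_
      filter_upwards [eventually_ge_atTop j'] with N hN
      exact hmem N hN x.2 (by rw [dist_self]; positivity)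
    exact tendsto_nhds_unique h2 tendsto_const_nhds
  rw [Metric.tendsto_nhds]
  intro ε hε
  set L := ∫ x, f x.1 * φ x.2 ∂μ with hL
  set ε' := ε / (4 * (‖f‖ + 1)) with hε'def
  have hfnn : (0:ℝ) ≤ ‖f‖ := norm_nonneg _
  have hε'pos : 0 < ε' := by rw [hε'def]; positivity
  have hfε' : ‖f‖ * ε' ≤ ε / 4 := by
    have heq : (‖f‖ + 1) * ε' = ε / 4 := by
      rw [hε'def]; field_simp
    nlinarith [hε'pos]
  -- Step 1: choose j with  μ (S j)ᶜ  small
  set S : ℕ → Set (X × Y) := fun j => {x | x.2 ∈ Gset φs j 0 ∪ Gset φs j 1} with hSdef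
  have hSmeas : ∀ j, MeasurableSet (S j) := fun j =>
    measurable_snd (((isClosed_Gset φs j 0).union (isClosed_Gset φs j 1)).measurableSet)
  have hSmono : Monotone S := fun a b hab x hx => by
    rcases hx with h | h
    · exact Or.inl (Gset_mono φs 0 hab h)
    · exact Or.inr (Gset_mono φs 1 hab h)
  have haeU : ∀ᵐ x ∂μ, x ∈ ⋃ j, S j := by
    filter_upwards [hcont] with x hx
    obtain ⟨j, hj⟩ := exists_mem_Gset φs (φ x.2) hφs01 (hφ01 x.2) hx
    refine Set.mem_iUnion.2 ⟨j, ?_⟩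
    rcases hφ01 x.2 with h | h
    · rw [h] at hj; exact Or.inl hj
    · rw [h] at hj; exact Or.inr hj
  have hμU : μ (⋃ j, S j) = 1 := by
    have h0 : μ ((⋃ j, S j)ᶜ) = 0 := ae_iff.1 haeU
    have h1 := measure_add_measure_compl (μ := μ) (MeasurableSet.iUnion hSmeas)
    rw [h0, add_zero, measure_univ] at h1
    exact h1
  obtain ⟨j, hj⟩ : ∃ j, μ ((S j)ᶜ) ≤ ENNReal.ofReal ε' := by
    rcases le_or_gt 1 (ENNReal.ofReal ε') with h | h
    · exact ⟨0, le_trans prob_le_one h⟩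
    · have hne0 : ENNReal.ofReal ε' ≠ 0 := (ENNReal.ofReal_pos.2 hε'pos).ne'
      have hlt : (1 : ℝ≥0∞) - ENNReal.ofReal ε' < 1 :=
        ENNReal.sub_lt_self ENNReal.one_ne_top one_ne_zero hne0
      have htend := tendsto_measure_iUnion_atTop (μ := μ) hSmono
      rw [hμU] at htend
      obtain ⟨j, hj2⟩ := (htend.eventually_const_lt hlt).exists
      refine ⟨j, ?_⟩
      rw [prob_compl_eq_one_sub (hSmeas j), tsub_le_iff_right]
      have h3 := (ENNReal.sub_lt_iff_lt_right ENNReal.ofReal_ne_top h.le).1 hj2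
      calc (1:ℝ≥0∞) ≤ μ (S j) + ENNReal.ofReal ε' := h3.le
        _ = ENNReal.ofReal ε' + μ (S j) := add_comm _ _
  have hbad1 : (μ ((S j)ᶜ)).toReal ≤ ε' := ENNReal.toReal_le_of_le_ofReal hε'pos.le hj
  -- Step 2: choose δ
  set D1 := Gset φs (j+1) 1 with hD1def
  set D0 := Gset φs (j+1) 0 with hD0def
  have hD1closed : IsClosed D1 := isClosed_Gset φs (j+1) 1
  obtain ⟨δ, hδpos, hbad2'⟩ : ∃ δ : ℝ, 0 < δ ∧
      μ ({x : X × Y | x.2 ∈ thickening δ D1} \ {x : X × Y | x.2 ∈ D1}) ≤ ENNReal.ofReal ε' := by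
    set T : ℕ → Set (X × Y) := fun n => {x | x.2 ∈ thickening (1/(n+1)) D1} with hTdef
    have hTmeas : ∀ n : ℕ, MeasurableSet (T n) := fun n =>
      measurable_snd isOpen_thickening.measurableSet
    have hTanti : Antitone T := fun a b hab x hx => by
      refine Metric.thickening_mono ?_ D1 hx
      apply one_div_le_one_div_of_le
      · positivity
      · exact_mod_cast Nat.succ_le_succ hab
    have hiInter : (⋂ n : ℕ, T n) = {x : X × Y | x.2 ∈ D1} := by
      ext x
      simp only [hTdef, Set.mem_iInter, Set.mem_setOf_eq]
      constructor
      · intro hx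
        have hcl : x.2 ∈ closure D1 := by
          rw [Metric.mem_closure_iff]
          intro ε0 hε0
          obtain ⟨n, hn⟩ := exists_nat_one_div_lt hε0
          obtain ⟨z, hz, hdz⟩ := Metric.mem_thickening_iff.1 (hx n)
          exact ⟨z, hz, hdz.trans hn⟩
        rwa [hD1closed.closure_eq] at hcl
      · intro hx n
        exact self_subset_thickening (by positivity) D1 hx
    have htend := tendsto_measure_iInter_atTop (fun n => (hTmeas n).nullMeasurableSet)
      hTanti ⟨0, measure_ne_top μ _⟩
    rw [hiInter] at htend
    have hD1m : MeasurableSet {x : X × Y | x.2 ∈ D1} := measurable_snd hD1closed.measurableSet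
    have hlt : μ {x : X × Y | x.2 ∈ D1} < μ {x : X × Y | x.2 ∈ D1} + ENNReal.ofReal ε' :=
      ENNReal.lt_add_right (measure_ne_top μ _) (ENNReal.ofReal_pos.2 hε'pos).ne'
    obtain ⟨n, hn⟩ := (htend.eventually_lt_const hlt).exists
    refine ⟨1/(n+1), by positivity, ?_⟩
    have hsub : {x : X × Y | x.2 ∈ D1} ⊆ T n := fun x hx =>
      self_subset_thickening (by positivity) D1 hx
    rw [measure_diff hsub hD1m.nullMeasurableSet (measure_ne_top μ _), tsub_le_iff_right]
    exact le_trans hn.le (by rw [add_comm])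
  set bad2 := {x : X × Y | x.2 ∈ thickening δ D1} \ {x : X × Y | x.2 ∈ D1} with hbad2def
  have hbad2meas : MeasurableSet bad2 :=
    (measurable_snd isOpen_thickening.measurableSet).diff
      (measurable_snd hD1closed.measurableSet)
  have hbad2 : (μ bad2).toReal ≤ ε' := ENNReal.toReal_le_of_le_ofReal hε'pos.le hbad2'
  -- radii
  set r' : ℝ := 1/(j+1) - 1/(j+2) with hr'def
  have hr'pos : 0 < r' := by
    rw [hr'def]
    have h2 : (1:ℝ)/(j+2) < 1/(j+1) := by
      apply one_div_lt_one_div_of_lt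
      · positivity
      · linarith
    linarith
  -- approximants
  set g1 := tiR hr'pos (Gset φs j 1) with hg1def
  set gup := tiR hδpos D1 with hgupdef
  set gall := (1 : BoundedContinuousFunction Y ℝ)
    - tiR hr'pos (Gset φs j 0 ∪ Gset φs j 1) with hgalldef
  have hgall_eq : ∀ y, gall y = 1 - tiR hr'pos (Gset φs j 0 ∪ Gset φs j 1) y := fun y => by
    rw [hgalldef]; simp
  have hgall01 : ∀ y, 0 ≤ gall y ∧ gall y ≤ 1 := fun y => by
    rw [hgall_eq]
    constructor
    · linarith [tiR_le_one hr'pos (Gset φs j 0 ∪ Gset φs j 1) y]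
    · linarith [tiR_nonneg hr'pos (Gset φs j 0 ∪ Gset φs j 1) y]
  have hg1_nonneg : ∀ y, 0 ≤ g1 y := fun y => tiR_nonneg _ _ y
  have hg1_le_one : ∀ y, g1 y ≤ 1 := fun y => tiR_le_one _ _ y
  have hg1_one : ∀ y, y ∈ Gset φs j 1 → g1 y = 1 := fun y hy => tiR_one _ _ hy
  have hg1_zero : ∀ y, y ∉ thickening r' (Gset φs j 1) → g1 y = 0 := fun y hy => tiR_zero _ _ hy
  have hgup_nonneg : ∀ y, 0 ≤ gup y := fun y => tiR_nonneg _ _ y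
  have hgup_le_one : ∀ y, gup y ≤ 1 := fun y => tiR_le_one _ _ y
  have hgup_one : ∀ y, y ∈ D1 → gup y = 1 := fun y hy => tiR_one _ _ hy
  have hgup_zero : ∀ y, y ∉ thickening δ D1 → gup y = 0 := fun y hy => tiR_zero _ _ hy
  have hgall_zero : ∀ y, y ∈ Gset φs j 0 ∪ Gset φs j 1 → gall y = 0 := fun y hy => by
    rw [hgall_eq, tiR_one hr'pos _ hy, sub_self]
  have hgall_one : ∀ y, y ∉ thickening r' (Gset φs j 0 ∪ Gset φs j 1) → gall y = 1 :=
    fun y hy => by rw [hgall_eq, tiR_zero hr'pos _ hy, sub_zero]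
  have hg1_abs : ∀ y, |g1 y| ≤ 1 := fun y => tiR_abs_le_one _ _ y
  have hgup_abs : ∀ y, |gup y| ≤ 1 := fun y => tiR_abs_le_one _ _ y
  have hgall_abs : ∀ y, |gall y| ≤ 1 := fun y => by
    rw [abs_le]; have := hgall01 y; exact ⟨by linarith [this.1], this.2⟩
  -- integrability
  have hintφs : ∀ N, Integrable (fun x : X × Y => f x.1 * φs N x.2) (μs N) := fun N => by
    haveI := hμs N; exact int_aux f (μs N) (φs N) (hφs_meas N) (hφs_abs N)
  have hintφ : Integrable (fun x : X × Y => f x.1 * φ x.2) μ := int_aux f μ φ hφ_meas hφ_abs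
  have hintg : ∀ (ν : Measure (X × Y)), IsProbabilityMeasure ν →
      ∀ g : BoundedContinuousFunction Y ℝ, (∀ y, |g y| ≤ 1) →
      Integrable (fun x : X × Y => f x.1 * g x.2) ν := fun ν hν g hg => by
    haveI := hν; exact int_aux f ν g g.continuous.measurable hg
  have hindint : ∀ s : Set (X × Y), MeasurableSet s →
      Integrable (s.indicator (fun _ => ‖f‖)) μ := fun s hs =>
    (integrable_const ‖f‖).indicator hs
  -- the three limit comparisons
  have hfb : ∀ a, f a ≤ ‖f‖ := fun a => le_trans (le_abs_self _)
    (by rw [← Real.norm_eq_abs]; exact f.norm_coe_le_norm a)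
  have hcomp1 : L - ∫ x, f x.1 * g1 x.2 ∂μ ≤ ‖f‖ * ε' := by
    have hmono : (fun x : X × Y => f x.1 * φ x.2 - f x.1 * g1 x.2) ≤ᵐ[μ]
        ((S j)ᶜ).indicator (fun _ => ‖f‖) := by
      filter_upwards [haeφc] with x hx
      by_cases hxS : x ∈ S j
      · have hind : ((S j)ᶜ).indicator (fun _ => ‖f‖) x = 0 :=
          Set.indicator_of_notMem (Set.notMem_compl_iff.mpr hxS) _
        rw [hind]
        have hxS' : x.2 ∈ Gset φs j 0 ∪ Gset φs j 1 := hxS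
        rcases hxS' with h0 | h1
        · rw [hx j 0 h0, mul_zero]
          linarith [mul_nonneg (hf x.1) (hg1_nonneg x.2)]
        · rw [hx j 1 h1, hg1_one x.2 h1, mul_one, sub_self]
      · have hind : ((S j)ᶜ).indicator (fun _ => ‖f‖) x = ‖f‖ :=
          Set.indicator_of_mem (Set.mem_compl hxS) _
        rw [hind]
        have h1 : f x.1 * φ x.2 ≤ ‖f‖ := by
          rcases hφ01 x.2 with h | h <;> rw [h]
          · rw [mul_zero]; exact hfnn
          · rw [mul_one]; exact hfb x.1
        linarith [mul_nonneg (hf x.1) (hg1_nonneg x.2)]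
    have hint1 := hintg μ hμ g1 hg1_abs
    calc L - ∫ x, f x.1 * g1 x.2 ∂μ
        = ∫ x, (f x.1 * φ x.2 - f x.1 * g1 x.2) ∂μ := (integral_sub hintφ hint1).symm
      _ ≤ ∫ x, ((S j)ᶜ).indicator (fun _ => ‖f‖) x ∂μ :=
          integral_mono_ae (hintφ.sub hint1) (hindint _ (hSmeas j).compl) hmono
      _ = (μ ((S j)ᶜ)).toReal • ‖f‖ := integral_indicator_const _ (hSmeas j).compl
      _ ≤ ‖f‖ * ε' := by
          rw [smul_eq_mul, mul_comm]
          exact mul_le_mul_of_nonneg_left hbad1 hfnn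
  have hcomp2 : (∫ x, f x.1 * gup x.2 ∂μ) - L ≤ ‖f‖ * ε' := by
    have hmono : (fun x : X × Y => f x.1 * gup x.2 - f x.1 * φ x.2) ≤ᵐ[μ]
        bad2.indicator (fun _ => ‖f‖) := by
      filter_upwards [haeφc] with x hx
      have hindnn : 0 ≤ bad2.indicator (fun _ => ‖f‖) x :=
        Set.indicator_nonneg (fun _ _ => hfnn) x
      rcases hφ01 x.2 with h0 | h1
      · by_cases ht : x.2 ∈ thickening δ D1
        · have hxD1 : x.2 ∉ D1 := by
            intro hD
            have h2 := hx (j+1) 1 hD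
            rw [h0] at h2
            norm_num at h2
          have hmem : x ∈ bad2 := ⟨ht, hxD1⟩
          rw [Set.indicator_of_mem hmem]
          have hup : f x.1 * gup x.2 ≤ ‖f‖ := by
            calc f x.1 * gup x.2 ≤ ‖f‖ * 1 :=
                mul_le_mul (hfb x.1) (hgup_le_one x.2) (hgup_nonneg x.2) hfnn
              _ = ‖f‖ := mul_one _
          rw [h0, mul_zero]
          linarith
        · rw [hgup_zero x.2 ht, mul_zero, h0, mul_zero, sub_zero]
          exact hindnn
      · rw [h1, mul_one]
        have h3 : f x.1 * gup x.2 ≤ f x.1 := by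
          calc f x.1 * gup x.2 ≤ f x.1 * 1 :=
              mul_le_mul_of_nonneg_left (hgup_le_one x.2) (hf x.1)
            _ = f x.1 := mul_one _
        linarith
    have hint2 := hintg μ hμ gup hgup_abs
    calc (∫ x, f x.1 * gup x.2 ∂μ) - L
        = ∫ x, (f x.1 * gup x.2 - f x.1 * φ x.2) ∂μ := (integral_sub hint2 hintφ).symm
      _ ≤ ∫ x, bad2.indicator (fun _ => ‖f‖) x ∂μ :=
          integral_mono_ae (hint2.sub hintφ) (hindint _ hbad2meas) hmono
      _ = (μ bad2).toReal • ‖f‖ := integral_indicator_const _ hbad2meas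
      _ ≤ ‖f‖ * ε' := by
          rw [smul_eq_mul, mul_comm]
          exact mul_le_mul_of_nonneg_left hbad2 hfnn
  have hcomp3 : (∫ x, f x.1 * gall x.2 ∂μ) ≤ ‖f‖ * ε' := by
    have hmono : (fun x : X × Y => f x.1 * gall x.2) ≤ᵐ[μ]
        ((S j)ᶜ).indicator (fun _ => ‖f‖) := ae_of_all _ fun x => by
      show f x.1 * gall x.2 ≤ ((S j)ᶜ).indicator (fun _ => ‖f‖) x
      by_cases hxS : x ∈ S j
      · have hxS' : x.2 ∈ Gset φs j 0 ∪ Gset φs j 1 := hxS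
        rw [Set.indicator_of_notMem (Set.notMem_compl_iff.mpr hxS) _, hgall_zero x.2 hxS', mul_zero]
      · rw [Set.indicator_of_mem (Set.mem_compl hxS)]
        calc f x.1 * gall x.2 ≤ ‖f‖ * 1 :=
            mul_le_mul (hfb x.1) (hgall01 x.2).2 (hgall01 x.2).1 hfnn
          _ = ‖f‖ := mul_one _
    have hint3 := hintg μ hμ gall hgall_abs
    calc (∫ x, f x.1 * gall x.2 ∂μ)
        ≤ ∫ x, ((S j)ᶜ).indicator (fun _ => ‖f‖) x ∂μ :=
          integral_mono_ae hint3 (hindint _ (hSmeas j).compl) hmono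
      _ = (μ ((S j)ᶜ)).toReal • ‖f‖ := integral_indicator_const _ (hSmeas j).compl
      _ ≤ ‖f‖ * ε' := by
          rw [smul_eq_mul, mul_comm]
          exact mul_le_mul_of_nonneg_left hbad1 hfnn
  -- eventual inequalities
  have hlowN : ∀ N, j + 1 ≤ N →
      (∫ x, f x.1 * g1 x.2 ∂(μs N)) ≤ ∫ x, f x.1 * φs N x.2 ∂(μs N) := by
    intro N hN
    refine integral_mono (hintg (μs N) (hμs N) g1 hg1_abs) (hintφs N) fun x => ?_
    refine mul_le_mul_of_nonneg_left ?_ (hf x.1)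
    by_cases hx2 : x.2 ∈ thickening r' (Gset φs j 1)
    · have hD : x.2 ∈ D1 := thickening_Gset_subset φs j 1 hx2
      rw [hD N hN x.2 (by rw [dist_self]; positivity)]
      exact hg1_le_one x.2
    · rw [hg1_zero x.2 hx2]
      rcases hφs01 N x.2 with h | h <;> rw [h] <;> norm_num
  have hupN : ∀ N, j + 1 ≤ N →
      (∫ x, f x.1 * φs N x.2 ∂(μs N)) ≤
        (∫ x, f x.1 * gup x.2 ∂(μs N)) + ∫ x, f x.1 * gall x.2 ∂(μs N) := by
    intro N hN
    rw [← integral_add (hintg (μs N) (hμs N) gup hgup_abs)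
      (hintg (μs N) (hμs N) gall hgall_abs)]
    refine integral_mono (hintφs N)
      ((hintg (μs N) (hμs N) gup hgup_abs).add (hintg (μs N) (hμs N) gall hgall_abs))
      fun x => ?_
    show f x.1 * φs N x.2 ≤ f x.1 * gup x.2 + f x.1 * gall x.2
    rw [← mul_add]
    refine mul_le_mul_of_nonneg_left ?_ (hf x.1)
    by_cases h1 : x.2 ∈ D1
    · rw [hgup_one x.2 h1]
      rcases hφs01 N x.2 with h | h <;> rw [h] <;> linarith [(hgall01 x.2).1]
    · by_cases h0 : x.2 ∈ D0
      · rw [h0 N hN x.2 (by rw [dist_self]; positivity)]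
        linarith [hgup_nonneg x.2, (hgall01 x.2).1]
      · have hnt : x.2 ∉ thickening r' (Gset φs j 0 ∪ Gset φs j 1) := by
          intro h
          rw [thickening_union] at h
          rcases h with h | h
          · exact h0 (thickening_Gset_subset φs j 0 h)
          · exact h1 (thickening_Gset_subset φs j 1 h)
        rw [hgall_one x.2 hnt]
        rcases hφs01 N x.2 with h | h <;> rw [h] <;> linarith [hgup_nonneg x.2]
  -- conclude
  have h1t := conv_prod g1
  have h2t := conv_prod gup
  have h3t := conv_prod gall
  rw [Metric.tendsto_nhds] at h1t h2t h3t
  have hε4 : 0 < ε / 4 := by linarith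
  filter_upwards [h1t (ε/4) hε4, h2t (ε/4) hε4, h3t (ε/4) hε4,
    eventually_ge_atTop (j+1)] with N hN1 hN2 hN3 hNj
  rw [Real.dist_eq] at hN1 hN2 hN3 ⊢
  have e1 := abs_sub_lt_iff.1 hN1
  have e2 := abs_sub_lt_iff.1 hN2
  have e3 := abs_sub_lt_iff.1 hN3
  rw [abs_sub_lt_iff]
  constructor
  · -- upper
    have := hupN N hNj
    nlinarith [e2.1, e3.1, hcomp2, hcomp3, hfε']
  · -- lower
    have := hlowN N hNj
    nlinarith [e1.2, hcomp1, hfε']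

set_option maxHeartbeats 1000000 in
lemma key_gen
    (μs : ℕ → Measure (X × Y)) (μ : Measure (X × Y))
    (hμs : ∀ N, IsProbabilityMeasure (μs N)) (hμ : IsProbabilityMeasure μ)
    (hconv : TendstoWeakly μs μ)
    (φs : ℕ → Y → ℝ) (φ : Y → ℝ)
    (hφs_meas : ∀ N, Measurable (φs N)) (hφ_meas : Measurable φ)
    (hφs01 : ∀ N y, φs N y = 0 ∨ φs N y = 1) (hφ01 : ∀ y, φ y = 0 ∨ φ y = 1)
    (hcont : ∀ᵐ x ∂μ, ∀ ys : ℕ → Y, Tendsto ys atTop (𝓝 x.2) →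
      Tendsto (fun N => φs N (ys N)) atTop (𝓝 (φ x.2)))
    (f : BoundedContinuousFunction X ℝ) :
    Tendsto (fun N => ∫ x, f x.1 * φs N x.2 ∂(μs N)) atTop (𝓝 (∫ x, f x.1 * φ x.2 ∂μ)) := by
  have hφs_abs : ∀ N y, |φs N y| ≤ 1 := fun N y => by
    rcases hφs01 N y with h | h <;> rw [h] <;> norm_num
  have hφ_abs : ∀ y, |φ y| ≤ 1 := fun y => by
    rcases hφ01 y with h | h <;> rw [h] <;> norm_num
  set fp := f + BoundedContinuousFunction.const X ‖f‖ with hfpdef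
  have hfp_apply : ∀ a, fp a = f a + ‖f‖ := fun a => by rw [hfpdef]; simp
  have hfp : ∀ a, 0 ≤ fp a := fun a => by
    rw [hfp_apply]
    have h1 : |f a| ≤ ‖f‖ := by rw [← Real.norm_eq_abs]; exact f.norm_coe_le_norm a
    linarith [neg_abs_le (f a)]
  have hc : ∀ a : X, 0 ≤ (BoundedContinuousFunction.const X ‖f‖) a := fun a => by
    simp [norm_nonneg]
  have h1 := key_nonneg μs μ hμs hμ hconv φs φ hφs_meas hφ_meas hφs01 hφ01 hcont fp hfp
  have h2 := key_nonneg μs μ hμs hμ hconv φs φ hφs_meas hφ_meas hφs01 hφ01 hcont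
    (BoundedContinuousFunction.const X ‖f‖) hc
  have h3 := h1.sub h2
  have hid : ∀ (ν : Measure (X × Y)), IsProbabilityMeasure ν → ∀ g : Y → ℝ, Measurable g →
      (∀ y, |g y| ≤ 1) →
      (∫ x, fp x.1 * g x.2 ∂ν) - (∫ x, (BoundedContinuousFunction.const X ‖f‖) x.1 * g x.2 ∂ν)
        = ∫ x, f x.1 * g x.2 ∂ν := by
    intro ν hν g hgm hg1
    haveI := hν
    have i1 : Integrable (fun x : X × Y => fp x.1 * g x.2) ν := int_aux fp ν g hgm hg1
    have i2 : Integrable (fun x : X × Y =>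
        (BoundedContinuousFunction.const X ‖f‖) x.1 * g x.2) ν := int_aux _ ν g hgm hg1
    rw [← integral_sub i1 i2]
    refine integral_congr_ae (ae_of_all _ fun x => ?_)
    have hcx : (BoundedContinuousFunction.const X ‖f‖) x.1 = ‖f‖ := rfl
    show fp x.1 * g x.2 - (BoundedContinuousFunction.const X ‖f‖) x.1 * g x.2 = f x.1 * g x.2
    rw [hcx, hfp_apply]
    ring
  have heqfun : (fun N => (∫ x, fp x.1 * φs N x.2 ∂(μs N))
      - ∫ x, (BoundedContinuousFunction.const X ‖f‖) x.1 * φs N x.2 ∂(μs N))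
      = fun N => ∫ x, f x.1 * φs N x.2 ∂(μs N) :=
    funext fun N => hid (μs N) (hμs N) (φs N) (hφs_meas N) (hφs_abs N)
  rw [heqfun] at h3
  rw [hid μ hμ φ hφ_meas hφ_abs] at h3
  exact h3


end RerandomizationAux

set_option maxHeartbeats 1000000 in
theorem rerandomization_no_effect_when_independent
    {p m k : ℕ}
    (μs : ℕ → Measure ((Fin p → ℝ) × (Fin m → ℝ) × (Fin k → ℝ)))
    (μ : Measure ((Fin p → ℝ) × (Fin m → ℝ) × (Fin k → ℝ)))
    (hμs : ∀ N, IsProbabilityMeasure (μs N)) (hμ : IsProbabilityMeasure μ)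
    (hconv : TendstoWeakly μs μ)
    -- A is independent of (B, C) under the limit law
    (hindep : μ = (μ.map Prod.fst).prod (μ.map Prod.snd))
    (φs : ℕ → (Fin m → ℝ) × (Fin k → ℝ) → ℝ) (φ : (Fin m → ℝ) × (Fin k → ℝ) → ℝ)
    (hφs_meas : ∀ N, Measurable (φs N)) (hφ_meas : Measurable φ)
    (hφs01 : ∀ N y, φs N y = 0 ∨ φs N y = 1) (hφ01 : ∀ y, φ y = 0 ∨ φ y = 1)
    (hcont : ∀ᵐ y ∂(μ.map (fun x => (x.2.1, x.2.2))),
      ∀ ys : ℕ → (Fin m → ℝ) × (Fin k → ℝ), Tendsto ys atTop (𝓝 y) →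
        Tendsto (fun N => φs N (ys N)) atTop (𝓝 (φ y)))
    (hpos : 0 < μ {x | φ (x.2.1, x.2.2) = 1}) :
    TendstoWeakly
      (fun N => ((μs N)[|{x | φs N (x.2.1, x.2.2) = 1}]).map Prod.fst)
      (μ.map Prod.fst) := by
  intro f
  haveI := hμ
  have hgmeas : Measurable
      (fun x : (Fin p → ℝ) × (Fin m → ℝ) × (Fin k → ℝ) => (x.2.1, x.2.2)) :=
    (measurable_fst.comp measurable_snd).prodMk (measurable_snd.comp measurable_snd)
  have hcont' : ∀ᵐ x ∂μ, ∀ ys : ℕ → (Fin m → ℝ) × (Fin k → ℝ),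
      Tendsto ys atTop (𝓝 x.2) → Tendsto (fun N => φs N (ys N)) atTop (𝓝 (φ x.2)) :=
    ae_of_ae_map hgmeas.aemeasurable hcont
  have hEmeas : ∀ N, MeasurableSet
      {x : (Fin p → ℝ) × (Fin m → ℝ) × (Fin k → ℝ) | φs N (x.2.1, x.2.2) = 1} := fun N =>
    ((hφs_meas N).comp hgmeas) (measurableSet_singleton 1)
  have hrew : ∀ N, (∫ a, f a ∂(((μs N)[|{x | φs N (x.2.1, x.2.2) = 1}]).map Prod.fst))
      = ((μs N {x | φs N (x.2.1, x.2.2) = 1}).toReal)⁻¹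
        * ∫ x, f x.1 * φs N x.2 ∂(μs N) := by
    intro N
    rw [integral_map measurable_fst.aemeasurable f.continuous.measurable.aestronglyMeasurable]
    rw [ProbabilityTheory.cond]
    rw [integral_smul_measure, ENNReal.toReal_inv, smul_eq_mul]
    congr 1
    rw [← integral_indicator (hEmeas N)]
    refine integral_congr_ae (ae_of_all _ fun x => ?_)
    beta_reduce
    by_cases hx : x ∈ {x : (Fin p → ℝ) × (Fin m → ℝ) × (Fin k → ℝ) | φs N (x.2.1, x.2.2) = 1}
    · rw [Set.indicator_of_mem hx]
      have h1 : φs N x.2 = 1 := hx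
      rw [h1, mul_one]
    · rw [Set.indicator_of_notMem hx]
      have h0 : φs N x.2 = 0 := by
        rcases hφs01 N x.2 with h | h
        · exact h
        · exact absurd h hx
      rw [h0, mul_zero]
  have hden : ∀ N, (μs N {x | φs N (x.2.1, x.2.2) = 1}).toReal
      = ∫ x, (1:ℝ) * φs N x.2 ∂(μs N) := by
    intro N
    haveI := hμs N
    have h1 : ∫ x, (1:ℝ) * φs N x.2 ∂(μs N)
        = ∫ x, Set.indicator {x : (Fin p → ℝ) × (Fin m → ℝ) × (Fin k → ℝ) |
            φs N (x.2.1, x.2.2) = 1} (fun _ => (1:ℝ)) x ∂(μs N) := by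
      refine integral_congr_ae (ae_of_all _ fun x => ?_)
      beta_reduce
      by_cases hx : x ∈ {x : (Fin p → ℝ) × (Fin m → ℝ) × (Fin k → ℝ) | φs N (x.2.1, x.2.2) = 1}
      · have h2 : φs N x.2 = 1 := hx
        rw [Set.indicator_of_mem hx, h2, mul_one]
      · have h2 : φs N x.2 = 0 := by
          rcases hφs01 N x.2 with h | h
          · exact h
          · exact absurd h hx
        rw [Set.indicator_of_notMem hx, h2, mul_zero]
    rw [h1, integral_indicator_const _ (hEmeas N), smul_eq_mul, mul_one]; rfl
  have hφEmeas : MeasurableSet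
      {x : (Fin p → ℝ) × (Fin m → ℝ) × (Fin k → ℝ) | φ (x.2.1, x.2.2) = 1} :=
    (hφ_meas.comp hgmeas) (measurableSet_singleton 1)
  have hdenμ : (μ {x | φ (x.2.1, x.2.2) = 1}).toReal = ∫ x, (1:ℝ) * φ x.2 ∂μ := by
    have h1 : ∫ x, (1:ℝ) * φ x.2 ∂μ
        = ∫ x, Set.indicator {x : (Fin p → ℝ) × (Fin m → ℝ) × (Fin k → ℝ) |
            φ (x.2.1, x.2.2) = 1} (fun _ => (1:ℝ)) x ∂μ := by
      refine integral_congr_ae (ae_of_all _ fun x => ?_)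
      beta_reduce
      by_cases hx : x ∈ {x : (Fin p → ℝ) × (Fin m → ℝ) × (Fin k → ℝ) | φ (x.2.1, x.2.2) = 1}
      · have h2 : φ x.2 = 1 := hx
        rw [Set.indicator_of_mem hx, h2, mul_one]
      · have h2 : φ x.2 = 0 := by
          rcases hφ01 x.2 with h | h
          · exact h
          · exact absurd h hx
        rw [Set.indicator_of_notMem hx, h2, mul_zero]
    rw [h1, integral_indicator_const _ hφEmeas, smul_eq_mul, mul_one]; rfl
  have hnum := key_gen μs μ hμs hμ hconv φs φ hφs_meas hφ_meas hφs01 hφ01 hcont' f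
  have hden_t := key_gen μs μ hμs hμ hconv φs φ hφs_meas hφ_meas hφs01 hφ01 hcont'
    (1 : BoundedContinuousFunction (Fin p → ℝ) ℝ)
  simp only [BoundedContinuousFunction.coe_one, Pi.one_apply] at hden_t
  have hdpos : 0 < ∫ x, (1:ℝ) * φ x.2 ∂μ := by
    rw [← hdenμ]
    exact ENNReal.toReal_pos hpos.ne' (measure_ne_top μ _)
  haveI hPf : IsProbabilityMeasure
      (μ.map (Prod.fst : (Fin p → ℝ) × (Fin m → ℝ) × (Fin k → ℝ) → Fin p → ℝ)) :=
    Measure.isProbabilityMeasure_map measurable_fst.aemeasurable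
  haveI hPs : IsProbabilityMeasure (μ.map
      (Prod.snd : (Fin p → ℝ) × (Fin m → ℝ) × (Fin k → ℝ) → (Fin m → ℝ) × (Fin k → ℝ))) :=
    Measure.isProbabilityMeasure_map measurable_snd.aemeasurable
  have hsplit : ∫ x, f x.1 * φ x.2 ∂μ
      = (∫ a, f a ∂(μ.map Prod.fst)) * ∫ x, (1:ℝ) * φ x.2 ∂μ := by
    conv_lhs => rw [hindep]
    rw [integral_prod_mul (fun a => f a) φ]
    congr 1
    rw [integral_map measurable_snd.aemeasurable hφ_meas.aestronglyMeasurable]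
    refine integral_congr_ae (ae_of_all _ fun x => ?_)
    beta_reduce
    rw [one_mul]
  have hfinal := Tendsto.mul (hden_t.inv₀ hdpos.ne') hnum
  have hval : (∫ a, f a ∂(μ.map Prod.fst))
      = (∫ x, (1:ℝ) * φ x.2 ∂μ)⁻¹ * ∫ x, f x.1 * φ x.2 ∂μ := by
    rw [hsplit]
    have h9 : (∫ x : (Fin p → ℝ) × (Fin m → ℝ) × (Fin k → ℝ), φ x.2 ∂μ) ≠ 0 := by
      have := hdpos.ne'
      simpa using this
    field_simp
  have hfun : (fun N => ∫ a, f a ∂(((μs N)[|{x | φs N (x.2.1, x.2.2) = 1}]).map Prod.fst))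
      = fun N => (∫ x, (1:ℝ) * φs N x.2 ∂(μs N))⁻¹ * ∫ x, f x.1 * φs N x.2 ∂(μs N) :=
    funext fun N => by rw [hrew N, hden N]
  rw [hfun, hval]
  exact hfinal
end
end
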